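/- arXiv:2502.20618 — 5 statements merged into one kernel-verified Lean document; each statement's English description precedes it below -/
import Mathlib

section
/- Let L/K be a finite Galois extension of fields with Galois group Γ. Let A be a ℤ[Γ]-module that is invertible, i.e. there exist a finite Γ-set S and a ℤ[Γ]-module D such that A ⊕ D is isomorphic as a ℤ[Γ]-module to the free abelian group ℤ[S] on S with the permutation action of Γ. Let Γ act diagonally on A ⊗_ℤ Lˣ (where Lˣ is the multiplicative group of L with its Galois action). Then the group cohomology H¹(Γ, A ⊗_ℤ Lˣ) vanishes. -/
open TensorProduct

set_option synthInstance.maxHeartbeats 400000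
set_option maxHeartbeats 1000000

open IntermediateField groupCohomology


lemma units_aux1 {G : Type*} [CommGroup G] (u v A : G) : u / (A * (u / v)) = v / A := by
  rw [div_mul_eq_div_div_swap, div_div_cancel]

lemma units_aux2 {G : Type*} [CommGroup G] (u X A : G) : (u / X) / (u / (A * X)) = A := by
  rw [div_eq_iff_eq_mul]
  simp [div_eq_mul_inv, mul_inv_rev, mul_comm, mul_left_comm, mul_assoc,
    mul_inv_cancel_left, inv_mul_cancel_left]


/-- Hilbert 90 for a point stabilizer: via Galois correspondence, the stabilizer of `s₀`
is the Galois group of `L` over its fixed field, so 1-cocycles on it are coboundaries. -/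
lemma exists_beta {K L : Type*} [Field K] [Field L] [Algebra K L] [FiniteDimensional K L]
    {S : Type*} [MulAction (L ≃ₐ[K] L) S]
    (F : (L ≃ₐ[K] L) → S → Lˣ)
    (hF : ∀ σ τ s, F (σ * τ) s = F σ s * σ • F τ (σ⁻¹ • s)) (s₀ : S) :
    ∃ β : Lˣ, ∀ τ : L ≃ₐ[K] L, τ • s₀ = s₀ → F τ s₀ = τ • β / β := by
  set H := MulAction.stabilizer (L ≃ₐ[K] L) s₀ with hH
  set K' := IntermediateField.fixedField H with hK'
  have hmemH : ∀ g : L ≃ₐ[K'] L, (g.restrictScalars K) ∈ H := by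
    intro g
    rw [← IntermediateField.fixingSubgroup_fixedField H]
    exact fun x => g.commutes x
  have hsmul : ∀ (g : L ≃ₐ[K'] L) (u : Lˣ), (g.restrictScalars K) • u = g • u :=
    fun g u => Units.ext rfl
  set f : (L ≃ₐ[K'] L) → Lˣ := fun g => F (g.restrictScalars K) s₀ with hf
  have hcoc : IsMulCocycle₁ f := by
    intro g h
    have hmul : (g * h).restrictScalars K
        = g.restrictScalars K * h.restrictScalars K := rfl
    have hfix : (g.restrictScalars K)⁻¹ • s₀ = s₀ := by
      rw [inv_smul_eq_iff]
      exact (hmemH g).symm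
    rw [hf]
    simp only [hmul, hF, hfix, hsmul]
    rw [mul_comm]
  obtain ⟨β, hβ⟩ := isMulCoboundary₁_of_isMulCocycle₁_of_aut_to_units f hcoc
  refine ⟨β, fun τ hτ => ?_⟩
  have hmem : τ ∈ IntermediateField.fixingSubgroup K' := by
    rw [hK', IntermediateField.fixingSubgroup_fixedField H]
    exact hτ
  set g := IntermediateField.fixingSubgroupEquiv K' ⟨τ, hmem⟩ with hg
  have hgτ : g.restrictScalars K = τ := by ext x; rfl
  have h2 : f g = g • β / β := (hβ g).symm
  rw [← hgτ, hsmul g β]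
  exact h2

/-- Key vanishing: every 1-cocycle of `Gal(L/K)` valued in `S → Lˣ`
(permutation-twisted action) is a coboundary. -/
lemma core_vanish {K L : Type*} [Field K] [Field L] [Algebra K L] [FiniteDimensional K L]
    {S : Type*} [MulAction (L ≃ₐ[K] L) S]
    (F : (L ≃ₐ[K] L) → S → Lˣ)
    (hF : ∀ σ τ s, F (σ * τ) s = F σ s * σ • F τ (σ⁻¹ • s)) :
    ∃ c : S → Lˣ, ∀ σ s, F σ s = (σ • c (σ⁻¹ • s)) / c s := by
  classical
  choose β hβ using fun s₀ => exists_beta F hF s₀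
  set p : S → S := fun s => (Quotient.mk (MulAction.orbitRel (L ≃ₐ[K] L) S) s).out with hp
  have hrep : ∀ s, ∃ γ : L ≃ₐ[K] L, γ • p s = s := by
    intro s
    obtain ⟨γ, hγ⟩ : p s ∈ MulAction.orbit (L ≃ₐ[K] L) s :=
      Quotient.mk_out (s := MulAction.orbitRel (L ≃ₐ[K] L) S) s
    exact ⟨γ⁻¹, by rw [← hγ, inv_smul_smul]⟩
  choose g hg using hrep
  have hporb : ∀ (σ : L ≃ₐ[K] L) (s : S), p (σ • s) = p s := by
    intro σ s
    have : (Quotient.mk (MulAction.orbitRel (L ≃ₐ[K] L) S) (σ • s))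
        = Quotient.mk (MulAction.orbitRel (L ≃ₐ[K] L) S) s :=
      Quotient.sound ⟨σ, rfl⟩
    simp only [hp, this]
  set c : S → Lˣ := fun s => (g s • β (p s)) / F (g s) s with hc
  -- well-definedness: any γ carrying `p s` to `s` computes `c s`
  have hwd : ∀ (s : S) (σ : L ≃ₐ[K] L), σ • p s = s → (σ • β (p s)) / F σ s = c s := by
    intro s σ hσ
    set τ := (g s)⁻¹ * σ with hτ
    have hτfix : τ • p s = p s := by
      rw [hτ, mul_smul, hσ, inv_smul_eq_iff, hg]
    have hσeq : σ = g s * τ := by rw [hτ]; group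
    have hinv : (g s)⁻¹ • s = p s := by rw [inv_smul_eq_iff, hg]
    have h1 : F σ s = F (g s) s * g s • F τ (p s) := by
      rw [hσeq, hF, hinv]
    have h2 : F τ (p s) = τ • β (p s) / β (p s) := hβ (p s) τ hτfix
    have h3 : σ • β (p s) = g s • τ • β (p s) := by rw [hσeq, mul_smul]
    show σ • β (p s) / F σ s = g s • β (p s) / F (g s) s
    rw [h1, h2, h3, smul_div']
    exact units_aux1 _ _ _
  refine ⟨c, fun σ s => ?_⟩
  have hps' : p (σ⁻¹ • s) = p s := hporb σ⁻¹ s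
  have h2 : (σ * g (σ⁻¹ • s)) • p s = s := by
    rw [mul_smul, ← hps', hg, smul_inv_smul]
  have h3 := hwd s (σ * g (σ⁻¹ • s)) h2
  have h4 : F (σ * g (σ⁻¹ • s)) s = F σ s * σ • F (g (σ⁻¹ • s)) (σ⁻¹ • s) := hF _ _ _
  have h5 : c (σ⁻¹ • s) = (g (σ⁻¹ • s) • β (p s)) / F (g (σ⁻¹ • s)) (σ⁻¹ • s) := by
    rw [hc]; simp only [hps']
  rw [h4] at h3
  rw [← h3, h5, smul_div', ← mul_smul]
  exact (units_aux2 _ _ _).symm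

section Plumbing

variable {S : Type*} {M : Type*} [AddCommGroup M]

noncomputable def evT (M : Type*) [AddCommGroup M] (s : S) :
    (TensorProduct ℤ (S →₀ ℤ) M) →ₗ[ℤ] M :=
  TensorProduct.lift ((LinearMap.lsmul ℤ M).comp (Finsupp.lapply s))

lemma evT_tmul (s : S) (φ : S →₀ ℤ) (m : M) : evT M s (φ ⊗ₜ[ℤ] m) = φ s • m := rfl

lemma univ_sum_single [Fintype S] (φ : S →₀ ℤ) :
    ∑ s, Finsupp.single s (φ s) = φ := by
  ext a
  simp [Finsupp.finset_sum_apply, Finsupp.single_apply]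

lemma evT_recon [Fintype S] (x : TensorProduct ℤ (S →₀ ℤ) M) :
    ∑ s, Finsupp.single s (1 : ℤ) ⊗ₜ[ℤ] evT M s x = x := by
  induction x using TensorProduct.induction_on with
  | zero => simp
  | tmul φ m =>
    have h1 : ∀ s : S, Finsupp.single s (1 : ℤ) ⊗ₜ[ℤ] evT M s (φ ⊗ₜ[ℤ] m)
        = Finsupp.single s (φ s) ⊗ₜ[ℤ] m := by
      intro s
      rw [evT_tmul, TensorProduct.tmul_smul, TensorProduct.smul_tmul',
        Finsupp.smul_single', mul_one]
    rw [Finset.sum_congr rfl fun s _ => h1 s, ← TensorProduct.sum_tmul, univ_sum_single]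
  | add x y hx hy =>
    simp only [map_add, TensorProduct.tmul_add, Finset.sum_add_distrib, hx, hy]

lemma evT_eq_iff [Fintype S] (x y : TensorProduct ℤ (S →₀ ℤ) M)
    (h : ∀ s : S, evT M s x = evT M s y) : x = y := by
  rw [← evT_recon x, ← evT_recon y]
  exact Finset.sum_congr rfl fun s _ => by rw [h s]

lemma map_tmul_int {M N P Q : Type*} [AddCommGroup M] [AddCommGroup N] [AddCommGroup P]
    [AddCommGroup Q] (f : M →ₗ[ℤ] P) (g : N →ₗ[ℤ] Q) (m : M) (n : N) :
    @DFunLike.coe (TensorProduct ℤ M N →ₗ[ℤ] TensorProduct ℤ P Q) _ _ _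
      (TensorProduct.map f g) (m ⊗ₜ[ℤ] n) = f m ⊗ₜ[ℤ] g n :=
  TensorProduct.map_tmul f g m n

end Plumbing

/-- The diagonal action of the Galois group `Γ = Gal(L/K)` on `A ⊗_ℤ Lˣ`
(with `Lˣ` written additively), as a ℤ-linear endomorphism for each `σ ∈ Γ`. -/
noncomputable def diagTensorAction (K L : Type*) [Field K] [Field L] [Algebra K L]
    (A : Type*) [AddCommGroup A] [DistribMulAction (L ≃ₐ[K] L) A] (σ : L ≃ₐ[K] L) :
    TensorProduct ℤ A (Additive Lˣ) →ₗ[ℤ] TensorProduct ℤ A (Additive Lˣ) :=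
  TensorProduct.map ((DistribMulAction.toAddMonoidHom A σ).toIntLinearMap)
    (Representation.ofMulDistribMulAction (L ≃ₐ[K] L) Lˣ σ)

/-- Let `L/K` be a finite Galois extension with Galois group `Γ`, and let `A` be an
invertible `ℤ[Γ]`-module: `A ⊕ D ≅ ℤ[S]` for some finite `Γ`-set `S` and some
`ℤ[Γ]`-module `D`, where `ℤ[S]` carries the permutation action.  Then
`H¹(Γ, A ⊗_ℤ Lˣ)` vanishes (for the diagonal action): every 1-cocycle
`f : Γ → A ⊗_ℤ Lˣ` is a coboundary. -/
theorem stmt_3 (K L : Type*) [Field K] [Field L] [Algebra K L]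
    [FiniteDimensional K L] [IsGalois K L]
    (A : Type*) [AddCommGroup A] [DistribMulAction (L ≃ₐ[K] L) A]
    (S : Type*) [Fintype S] [MulAction (L ≃ₐ[K] L) S]
    (D : Type*) [AddCommGroup D] [DistribMulAction (L ≃ₐ[K] L) D]
    (e : (A × D) ≃+ (S →₀ ℤ))
    (he : ∀ (g : L ≃ₐ[K] L) (a : A) (d : D),
      e (g • a, g • d) = Finsupp.mapDomain (fun s => g • s) (e (a, d)))
    (f : (L ≃ₐ[K] L) → TensorProduct ℤ A (Additive Lˣ))
    (hf : ∀ σ τ : L ≃ₐ[K] L, f (σ * τ) = f σ + diagTensorAction K L A σ (f τ)) :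
    ∃ t : TensorProduct ℤ A (Additive Lˣ),
      ∀ σ : L ≃ₐ[K] L, f σ = diagTensorAction K L A σ t - t := by
    classical
  set ρ : (L ≃ₐ[K] L) → Additive Lˣ →ₗ[ℤ] Additive Lˣ :=
    fun σ => Representation.ofMulDistribMulAction (L ≃ₐ[K] L) Lˣ σ with hρ
  set G : (L ≃ₐ[K] L) →
      (TensorProduct ℤ (S →₀ ℤ) (Additive Lˣ) →ₗ[ℤ] TensorProduct ℤ (S →₀ ℤ) (Additive Lˣ)) :=
    fun σ => TensorProduct.map (Finsupp.lmapDomain ℤ ℤ (fun s => σ • s)) (ρ σ) with hG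
  set ι : TensorProduct ℤ A (Additive Lˣ) →ₗ[ℤ] TensorProduct ℤ (S →₀ ℤ) (Additive Lˣ) :=
    TensorProduct.map ((e.toAddMonoidHom.comp (AddMonoidHom.inl A D)).toIntLinearMap)
      LinearMap.id with hι
  set π : TensorProduct ℤ (S →₀ ℤ) (Additive Lˣ) →ₗ[ℤ] TensorProduct ℤ A (Additive Lˣ) :=
    TensorProduct.map (((AddMonoidHom.fst A D).comp e.symm.toAddMonoidHom).toIntLinearMap)
      LinearMap.id with hπ
  have hπι : ∀ x, π (ι x) = x := by
    intro x
    induction x using TensorProduct.induction_on with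
    | zero => simp
    | tmul a m =>
      simp only [hι, hπ]
      simp only [map_tmul_int]
      simp
    | add x y hx hy => simp only [map_add, hx, hy]
  have hιe : ∀ σ x, ι (diagTensorAction K L A σ x) = G σ (ι x) := by
    intro σ x
    induction x using TensorProduct.induction_on with
    | zero => simp
    | tmul a m =>
      have h0 : e (σ • a, (0 : D)) = Finsupp.mapDomain (fun s => σ • s) (e (a, 0)) := by
        have := he σ a 0
        rwa [smul_zero] at this
      simp only [diagTensorAction, hι, hG]
      simp only [map_tmul_int]
      simp [h0, Finsupp.lmapDomain_apply, hρ, AlgEquiv.smul_units_def]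
    | add x y hx hy => simp only [map_add, hx, hy]
  have hπe : ∀ σ y, π (G σ y) = diagTensorAction K L A σ (π y) := by
    intro σ y
    induction y using TensorProduct.induction_on with
    | zero => simp
    | tmul φ m =>
      have h1 : Finsupp.mapDomain (fun s => σ • s) φ
          = e (σ • (e.symm φ).1, σ • (e.symm φ).2) := by
        rw [he σ (e.symm φ).1 (e.symm φ).2]
        simp
      have h2 : (e.symm (Finsupp.mapDomain (fun s => σ • s) φ)).1 = σ • (e.symm φ).1 := by
        rw [h1, AddEquiv.symm_apply_apply]
      simp only [diagTensorAction, hι, hπ, hG]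
      simp only [map_tmul_int]
      simp [Finsupp.lmapDomain_apply, h2, hρ, AlgEquiv.smul_units_def]
    | add x y hx hy => simp only [map_add, hx, hy]
  have hev : ∀ (σ : L ≃ₐ[K] L) (s : S) y,
      evT (Additive Lˣ) s (G σ y) = ρ σ (evT (Additive Lˣ) (σ⁻¹ • s) y) := by
    intro σ s y
    induction y using TensorProduct.induction_on with
    | zero => simp
    | tmul φ m =>
      rw [show G σ (φ ⊗ₜ[ℤ] m) = (Finsupp.lmapDomain ℤ ℤ (fun s => σ • s) φ) ⊗ₜ[ℤ] ρ σ m from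
        TensorProduct.map_tmul _ _ _ _]
      simp only [evT_tmul, Finsupp.lmapDomain_apply]
      rw [show s = σ • (σ⁻¹ • s) from (smul_inv_smul σ s).symm,
        Finsupp.mapDomain_apply (MulAction.injective σ), inv_smul_smul, map_zsmul]
    | add x y hx hy => simp only [map_add, hx, hy]
  set F : (L ≃ₐ[K] L) → S → Lˣ :=
    fun σ s => Additive.toMul (evT (Additive Lˣ) s (ι (f σ))) with hFdef
  have hFcoc : ∀ σ τ s, F (σ * τ) s = F σ s * σ • F τ (σ⁻¹ • s) := by
    intro σ τ s
    simp only [hFdef, hf σ τ, map_add, hιe, hev]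
    rw [toMul_add]
    simp [hρ, AlgEquiv.smul_units_def]
  obtain ⟨c, hc⟩ := core_vanish F hFcoc
  set t' : TensorProduct ℤ (S →₀ ℤ) (Additive Lˣ) :=
    ∑ s, Finsupp.single s (1 : ℤ) ⊗ₜ[ℤ] (Additive.ofMul (c s)) with ht'
  have hevt' : ∀ s, evT (Additive Lˣ) s t' = Additive.ofMul (c s) := by
    intro s
    rw [ht', map_sum]
    simp [evT_tmul, Finsupp.single_apply, ite_smul]
  have hmain : ∀ σ, ι (f σ) = G σ t' - t' := by
    intro σ
    apply evT_eq_iff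
    intro s
    rw [map_sub, hev, hevt', hevt']
    have h3 : evT (Additive Lˣ) s (ι (f σ)) = Additive.ofMul (F σ s) := rfl
    rw [h3, hc σ s, ofMul_div]
    simp [hρ, AlgEquiv.smul_units_def]
  refine ⟨π t', fun σ => ?_⟩
  have h4 := congrArg π (hmain σ)
  rw [hπι, map_sub, hπe] at h4
  exact h4
end

section
/- Let p be a prime, F a field of characteristic p, and G a finite p-group. Let M be a module over the group algebra F[G]. (a) If there exists x ∈ M with Σ_{g ∈ G} g·x ≠ 0, then M contains an F[G]-submodule isomorphic to F[G] that is a direct summand of M as an F[G]-module. (b) Consequently, if M is indecomposable (M ≠ 0 and M is not the internal direct sum of two nonzero F[G]-submodules) and M is not isomorphic to F[G], then Σ_{g ∈ G} g·x = 0 for every x ∈ M. -/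
open MonoidAlgebra

section Aux

variable {p : ℕ} [Fact p.Prime] {F : Type*} [Field F] [CharP F p]
  {G : Type*} [Group G] [Fintype G]

/-- The sum of all group elements in the group algebra. -/
noncomputable def sigmaElt (F : Type*) [Field F] (G : Type*) [Group G] [Fintype G] :
    MonoidAlgebra F G :=
  ∑ g : G, MonoidAlgebra.of F G g

lemma sigmaElt_apply (h : G) : (sigmaElt F G).coeff h = 1 := by
  classical
  rw [sigmaElt]
  simp only [MonoidAlgebra.of_apply]
  rw [MonoidAlgebra.coeff_sum, Finset.sum_apply']
  simp only [MonoidAlgebra.coeff_single, Finsupp.single_apply, Finset.sum_ite_eq', Finset.mem_univ, if_true]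

lemma sigmaElt_ne_zero : sigmaElt F G ≠ 0 := fun h => by
  have := sigmaElt_apply (F := F) (G := G) 1
  rw [h] at this
  simp at this

lemma fixed_eq_smul_sigma (b : MonoidAlgebra F G) (hb : ∀ g : G, MonoidAlgebra.of F G g * b = b) :
    b = b.coeff 1 • sigmaElt F G := by
  ext h
  have h1 : (MonoidAlgebra.of F G h * b).coeff h = b.coeff (h⁻¹ * h) := by
    rw [MonoidAlgebra.of_apply, MonoidAlgebra.coeff_single_mul_apply, one_mul]
  rw [hb h] at h1
  rw [MonoidAlgebra.coeff_smul_apply, sigmaElt_apply, smul_eq_mul, mul_one, h1, inv_mul_cancel]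

lemma sigma_mul (u : MonoidAlgebra F G) :
    sigmaElt F G * u = (∑ g : G, u.coeff g) • sigmaElt F G := by
  ext h
  rw [MonoidAlgebra.coeff_smul_apply, sigmaElt_apply, smul_eq_mul, mul_one]
  rw [sigmaElt, Finset.sum_mul, MonoidAlgebra.coeff_sum, Finsupp.finset_sum_apply]
  have key : ∀ g : G, (MonoidAlgebra.of F G g * u).coeff h = u.coeff (g⁻¹ * h) := fun g => by
    rw [MonoidAlgebra.of_apply, MonoidAlgebra.coeff_single_mul_apply, one_mul]
  rw [Finset.sum_congr rfl fun g _ => key g]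
  exact Equiv.sum_comp ((Equiv.inv G).trans (Equiv.mulRight h)) u.coeff

/-- Any nonzero submodule of the group algebra of a `p`-group over a field of
characteristic `p` contains the sum of all group elements. -/
lemma sigma_mem_of_ne_bot (hG : IsPGroup p G) (K : Submodule (MonoidAlgebra F G) (MonoidAlgebra F G))
    (a : MonoidAlgebra F G) (ha : a ∈ K) (h0 : a ≠ 0) : sigmaElt F G ∈ K := by
  classical
  letI : Algebra (ZMod p) F := ZMod.algebra F p
  -- the ZMod p span of the orbit of `a`
  set S : Set (MonoidAlgebra F G) := Set.range fun g : G => MonoidAlgebra.of F G g * a with hS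
  set W : Submodule (ZMod p) (MonoidAlgebra F G) := Submodule.span (ZMod p) S with hW
  have hSK : S ⊆ (K : Set (MonoidAlgebra F G)) := by
    rintro _ ⟨g, rfl⟩
    exact K.smul_mem (MonoidAlgebra.of F G g) ha
  have hWK : (W : Set (MonoidAlgebra F G)) ⊆ (K : Set (MonoidAlgebra F G)) := by
    have : W ≤ K.restrictScalars (ZMod p) := Submodule.span_le.mpr hSK
    exact this
  have haS : a ∈ S := ⟨1, by show MonoidAlgebra.of F G 1 * a = a; rw [map_one, one_mul]⟩
  have haW : a ∈ W := Submodule.subset_span haS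
  have hSfin : S.Finite := Set.finite_range _
  haveI : Module.Finite (ZMod p) W := Module.Finite.span_of_finite (ZMod p) hSfin
  haveI : Finite W := Module.finite_of_finite (ZMod p)
  haveI : Fintype W := Fintype.ofFinite _
  -- W is stable under the G-action
  have hstab : ∀ (g : G) (w : MonoidAlgebra F G), w ∈ W → MonoidAlgebra.of F G g * w ∈ W := by
    intro g w hw
    induction hw using Submodule.span_induction with
    | mem y hy =>
        obtain ⟨g', rfl⟩ := hy
        refine Submodule.subset_span ⟨g * g', ?_⟩
        show MonoidAlgebra.of F G (g * g') * a = MonoidAlgebra.of F G g * (MonoidAlgebra.of F G g' * a)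
        rw [map_mul, mul_assoc]
    | zero => rw [mul_zero]; exact W.zero_mem
    | add y z hy' hz' hy hz => rw [mul_add]; exact W.add_mem hy hz
    | smul c y hy' hy => rw [mul_smul_comm]; exact W.smul_mem c hy
  letI : SMul G W := ⟨fun g w => ⟨MonoidAlgebra.of F G g * (w : MonoidAlgebra F G), hstab g w w.2⟩⟩
  have hsmul_def : ∀ (g : G) (w : W),
      ((g • w : W) : MonoidAlgebra F G) = MonoidAlgebra.of F G g * (w : MonoidAlgebra F G) :=
    fun g w => rfl
  letI : MulAction G W :=
    { one_smul := fun w => Subtype.ext (by rw [hsmul_def, map_one, one_mul])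
      mul_smul := fun g h w => Subtype.ext (by
        rw [hsmul_def, hsmul_def, hsmul_def, map_mul, mul_assoc]) }
  -- counting fixed points
  haveI : Nontrivial W := ⟨⟨⟨a, haW⟩, 0, by simp [Subtype.ext_iff, h0]⟩⟩
  have hcardW : Fintype.card W = Fintype.card (ZMod p) ^ Module.finrank (ZMod p) W :=
    Module.card_eq_pow_finrank
  have hp : p.Prime := Fact.out
  have hfr : 0 < Module.finrank (ZMod p) W := Module.finrank_pos
  have hdvd : p ∣ Nat.card W := by
    rw [Nat.card_eq_fintype_card, hcardW, ZMod.card]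
    exact dvd_pow_self p hfr.ne'
  have hmod := hG.card_modEq_card_fixedPoints (α := W)
  have hdvdfix : p ∣ Nat.card (MulAction.fixedPoints G W) := by
    have : Nat.card (MulAction.fixedPoints G W) ≡ 0 [MOD p] :=
      (hmod.symm.trans (Nat.modEq_zero_iff_dvd.mpr hdvd))
    exact Nat.modEq_zero_iff_dvd.mp this
  have hzero_fixed : (⟨0, W.zero_mem⟩ : W) ∈ MulAction.fixedPoints G W := by
    intro g
    refine Subtype.ext ?_
    show MonoidAlgebra.of F G g * (0 : MonoidAlgebra F G) = (0 : MonoidAlgebra F G)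
    rw [mul_zero]
  haveI : Finite (MulAction.fixedPoints G W) := Subtype.finite
  have hpos : 0 < Nat.card (MulAction.fixedPoints G W) :=
    Nat.card_pos_iff.mpr ⟨⟨⟨_, hzero_fixed⟩⟩, inferInstance⟩
  have hge : 2 ≤ Nat.card (MulAction.fixedPoints G W) :=
    le_trans hp.two_le (Nat.le_of_dvd hpos hdvdfix)
  haveI : Fintype (MulAction.fixedPoints G W) := Fintype.ofFinite _
  obtain ⟨b, hbne⟩ := Fintype.exists_ne_of_one_lt_card
    (by rw [Nat.card_eq_fintype_card] at hge; exact lt_of_lt_of_le one_lt_two hge)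
    (⟨⟨0, W.zero_mem⟩, hzero_fixed⟩ : MulAction.fixedPoints G W)
  -- b is a nonzero fixed element
  have hbfix : ∀ g : G, MonoidAlgebra.of F G g * ((b : W) : MonoidAlgebra F G)
      = ((b : W) : MonoidAlgebra F G) := by
    intro g
    have h2 := b.2 g
    have h3 : ((g • (b : W) : W) : MonoidAlgebra F G) = ((b : W) : MonoidAlgebra F G) :=
      congrArg Subtype.val h2
    rwa [hsmul_def] at h3
  have hb0 : ((b : W) : MonoidAlgebra F G) ≠ 0 := by
    intro h
    apply hbne
    apply Subtype.ext
    apply Subtype.ext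
    simpa using h
  have hbK : ((b : W) : MonoidAlgebra F G) ∈ K := hWK (b : W).2
  have heq := fixed_eq_smul_sigma ((b : W) : MonoidAlgebra F G) hbfix
  have hb1 : ((b : W) : MonoidAlgebra F G).coeff 1 ≠ 0 := by
    intro h
    apply hb0
    rw [heq, h, zero_smul]
  have hσ : sigmaElt F G
      = (((b : W) : MonoidAlgebra F G).coeff 1)⁻¹ • ((b : W) : MonoidAlgebra F G) := by
    nth_rewrite 2 [heq]
    rw [smul_smul, inv_mul_cancel₀ hb1, one_smul]
  rw [hσ]
  exact K.smul_of_tower_mem _ hbK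

lemma isUnit_of_sum_ne_zero (hG : IsPGroup p G) (u : MonoidAlgebra F G)
    (h : (∑ g : G, u.coeff g) ≠ 0) : IsUnit u := by
  classical
  haveI : Module.Finite F (MonoidAlgebra F G) :=
    Module.Finite.of_basis (MonoidAlgebra.basis G F)
  set ru : MonoidAlgebra F G →ₗ[MonoidAlgebra F G] MonoidAlgebra F G :=
    LinearMap.toSpanSingleton (MonoidAlgebra F G) (MonoidAlgebra F G) u with hru
  have hru_apply : ∀ a, ru a = a * u := fun a => rfl
  have hinj : Function.Injective ru := by
    rw [← LinearMap.ker_eq_bot]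
    by_contra hk
    obtain ⟨a, haK, ha0⟩ := Submodule.exists_mem_ne_zero_of_ne_bot hk
    have hσ : sigmaElt F G ∈ LinearMap.ker ru := sigma_mem_of_ne_bot hG _ a haK ha0
    have hσ0 : sigmaElt F G * u = 0 := hσ
    rw [sigma_mul] at hσ0
    rcases smul_eq_zero.mp hσ0 with h' | h'
    · exact h h'
    · exact sigmaElt_ne_zero h'
  have hsurj : Function.Surjective ru := by
    have h1 : Function.Injective (ru.restrictScalars F) := hinj
    exact (LinearMap.injective_iff_surjective (f := ru.restrictScalars F)).mp h1
  obtain ⟨v, hv⟩ := hsurj 1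
  have hvu : v * u = 1 := by rw [← hru_apply]; exact hv
  have huv : u * v = 1 := by
    apply hinj
    rw [hru_apply, hru_apply, mul_assoc, hvu, mul_one, one_mul]
  exact ⟨⟨u, v, huv, hvu⟩, rfl⟩

/-- Part (a): if the trace of some element is nonzero, the module contains a free direct summand. -/
lemma part_a (hG : IsPGroup p G) (M : Type*) [AddCommGroup M] [Module (MonoidAlgebra F G) M]
    (x : M) (hx : (∑ g : G, (MonoidAlgebra.of F G g : MonoidAlgebra F G) • x) ≠ 0) :
    ∃ N : Submodule (MonoidAlgebra F G) M,
      Nonempty (N ≃ₗ[MonoidAlgebra F G] MonoidAlgebra F G) ∧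
      ∃ N' : Submodule (MonoidAlgebra F G) M, IsCompl N N' := by
  classical
  letI instF : Module F M := Module.compHom M (algebraMap F (MonoidAlgebra F G))
  haveI : IsScalarTower F (MonoidAlgebra F G) M :=
    ⟨fun r a m => by
      show (r • a) • m = algebraMap F (MonoidAlgebra F G) r • (a • m)
      rw [Algebra.smul_def, mul_smul]⟩
  haveI : SMulCommClass F (MonoidAlgebra F G) M :=
    ⟨fun r a m => by
      show algebraMap F (MonoidAlgebra F G) r • (a • m) = a • algebraMap F (MonoidAlgebra F G) r • m
      rw [← mul_smul, ← mul_smul, Algebra.commutes]⟩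
  have hσx : sigmaElt F G • x ≠ 0 := by
    rw [sigmaElt, Finset.sum_smul]
    exact hx
  obtain ⟨lam, hlam⟩ : ∃ lam : M →ₗ[F] F, lam (sigmaElt F G • x) ≠ 0 := by
    by_contra h
    push_neg at h
    exact hσx ((Module.forall_dual_apply_eq_zero_iff F _).mp h)
  -- the Frobenius-type map
  set Ψ : M → MonoidAlgebra F G := fun m =>
    ∑ g : G, MonoidAlgebra.single g (lam ((MonoidAlgebra.of F G g⁻¹) • m)) with hΨ
  have hΨadd : ∀ m n, Ψ (m + n) = Ψ m + Ψ n := by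
    intro m n
    simp only [hΨ, smul_add, map_add, MonoidAlgebra.single_add, Finset.sum_add_distrib]
  have hΨFsmul : ∀ (r : F) (m : M), Ψ (r • m) = r • Ψ m := by
    intro r m
    simp only [hΨ, Finset.smul_sum]
    refine Finset.sum_congr rfl fun g _ => ?_
    rw [smul_comm (MonoidAlgebra.of F G g⁻¹) r m, map_smul, smul_eq_mul,
      ← MonoidAlgebra.smul_single']
  have hΨsmul : ∀ (a : MonoidAlgebra F G) (m : M), Ψ (a • m) = a * Ψ m := by
    intro a
    induction a using MonoidAlgebra.induction_on with
    | of g =>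
        intro m
        have hrhs : MonoidAlgebra.of F G g * Ψ m
            = ∑ h : G, MonoidAlgebra.single (g * h) (lam ((MonoidAlgebra.of F G h⁻¹) • m)) := by
          rw [hΨ, Finset.mul_sum]
          refine Finset.sum_congr rfl fun h _ => ?_
          rw [MonoidAlgebra.of_apply, MonoidAlgebra.single_mul_single, one_mul]
        rw [hrhs, hΨ]
        refine Fintype.sum_equiv (Equiv.mulLeft g).symm _ _ fun h => ?_
        simp only [Equiv.mulLeft_symm, Equiv.coe_mulLeft, ← mul_smul, ← map_mul]
        congr 2
        · rw [mul_inv_cancel_left]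
        · rw [mul_inv_rev, inv_inv]
    | add a b ha hb =>
        intro m
        rw [add_smul, hΨadd, ha, hb, add_mul]
    | smul r a ha =>
        intro m
        rw [smul_assoc, hΨFsmul, ha, smul_mul_assoc]
  set ψ : M →ₗ[MonoidAlgebra F G] MonoidAlgebra F G :=
    { toFun := Ψ
      map_add' := hΨadd
      map_smul' := fun a m => hΨsmul a m } with hψ
  have hψ_apply : ∀ m, ψ m = Ψ m := fun m => rfl
  -- the coefficient sum of Ψ x is nonzero
  have hu_apply : ∀ g' : G, (Ψ x).coeff g' = lam (MonoidAlgebra.of F G g'⁻¹ • x) := by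
    intro g'
    rw [hΨ]
    rw [MonoidAlgebra.coeff_sum, Finset.sum_apply']
    simp only [MonoidAlgebra.coeff_single, Finsupp.single_apply, Finset.sum_ite_eq', Finset.mem_univ, if_true]
  have hεu : (∑ g : G, (Ψ x).coeff g) ≠ 0 := by
    have heq1 : (∑ g : G, (Ψ x).coeff g) = lam (sigmaElt F G • x) := by
      rw [Finset.sum_congr rfl fun g _ => hu_apply g, ← map_sum]
      congr 1
      rw [show (∑ g : G, MonoidAlgebra.of F G g⁻¹ • x) = ∑ g : G, MonoidAlgebra.of F G g • x from
        Equiv.sum_comp (Equiv.inv G) (fun g => MonoidAlgebra.of F G g • x)]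
      rw [sigmaElt, Finset.sum_smul]
    rw [heq1]
    exact hlam
  have hu : IsUnit (Ψ x) := isUnit_of_sum_ne_zero hG _ hεu
  set v : MonoidAlgebra F G := ↑hu.unit⁻¹ with hv
  have huv : Ψ x * v = 1 := hu.mul_val_inv
  set φ : MonoidAlgebra F G →ₗ[MonoidAlgebra F G] M :=
    LinearMap.toSpanSingleton (MonoidAlgebra F G) M x with hφ
  set θ : M →ₗ[MonoidAlgebra F G] MonoidAlgebra F G :=
    (LinearMap.toSpanSingleton (MonoidAlgebra F G) (MonoidAlgebra F G) v).comp ψ with hθ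
  have hθφ : ∀ a, θ (φ a) = a := by
    intro a
    rw [hθ, LinearMap.comp_apply, hφ, LinearMap.toSpanSingleton_apply,
      LinearMap.toSpanSingleton_apply, map_smul, hψ_apply, smul_eq_mul, smul_eq_mul,
      mul_assoc, huv, mul_one]
  have hφinj : Function.Injective φ := by
    intro a b hab
    have := congrArg θ hab
    rwa [hθφ, hθφ] at this
  set N : Submodule (MonoidAlgebra F G) M := LinearMap.range φ with hN
  refine ⟨N, ⟨(LinearEquiv.ofInjective φ hφinj).symm⟩, ?_⟩
  set f : M →ₗ[MonoidAlgebra F G] N :=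
    (φ.comp θ).codRestrict N (fun m => LinearMap.mem_range_self φ (θ m)) with hf
  have hproj : ∀ y : N, f (y : M) = y := by
    rintro ⟨y, a, rfl⟩
    apply Subtype.ext
    show φ (θ (φ a)) = φ a
    rw [hθφ]
  exact ⟨LinearMap.ker f, LinearMap.isCompl_of_proj hproj⟩

end Aux

/-- Let `p` be a prime, `F` a field of characteristic `p`, `G` a finite `p`-group, and
`M` a module over the group algebra `F[G]`.
(a) If there is `x ∈ M` with `∑ g ∈ G, g • x ≠ 0`, then `M` contains an `F[G]`-submodule
isomorphic to `F[G]` which is a direct summand of `M`.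
(b) Consequently, if `M` is indecomposable and not isomorphic to `F[G]`, then
`∑ g ∈ G, g • x = 0` for every `x ∈ M`. -/
theorem stmt_4 (p : ℕ) [Fact p.Prime] (F : Type*) [Field F] [CharP F p]
    (G : Type*) [Group G] [Fintype G] (hG : IsPGroup p G)
    (M : Type*) [AddCommGroup M] [Module (MonoidAlgebra F G) M] :
    ((∃ x : M, (∑ g : G, (MonoidAlgebra.of F G g : MonoidAlgebra F G) • x) ≠ 0) →
      ∃ N : Submodule (MonoidAlgebra F G) M,
        Nonempty (N ≃ₗ[MonoidAlgebra F G] MonoidAlgebra F G) ∧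
        ∃ N' : Submodule (MonoidAlgebra F G) M, IsCompl N N') ∧
    (Nontrivial M →
      (∀ N N' : Submodule (MonoidAlgebra F G) M, IsCompl N N' → N = ⊥ ∨ N' = ⊥) →
      IsEmpty (M ≃ₗ[MonoidAlgebra F G] MonoidAlgebra F G) →
      ∀ x : M, (∑ g : G, (MonoidAlgebra.of F G g : MonoidAlgebra F G) • x) = 0) := by
  constructor
  · rintro ⟨x, hx⟩
    exact part_a hG M x hx
  · intro hM hindec hnotiso x
    by_contra hx
    obtain ⟨N, ⟨e⟩, N', hc⟩ := part_a hG M x hx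
    rcases hindec N N' hc with h | h
    · haveI : Subsingleton N := h ▸ inferInstance
      haveI : Subsingleton (MonoidAlgebra F G) := e.symm.toEquiv.subsingleton
      exact false_of_nontrivial_of_subsingleton (MonoidAlgebra F G)
    · subst h
      have hN : N = ⊤ := codisjoint_bot.mp hc.codisjoint
      exact hnotiso.false (((LinearEquiv.ofTop N hN).symm.trans e))
end

section
/- With G and M as in the context (M = Ω^{−m}F₂ over the Klein four group), the invariant subspace M^G is the F₂-span of e₁, …, e_{m+1}; moreover, for each of the three subgroups H₁ = ⟨g⟩, H₂ = ⟨h⟩, H₃ = ⟨gh⟩ of order 2, the fixed subspace M^{H_a} also equals the F₂-span of e₁, …, e_{m+1}. -/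
/-- The Klein four group `ℤ/2 × ℤ/2`, written multiplicatively. -/
abbrev K4 : Type := Multiplicative (ZMod 2 × ZMod 2)

/-- The generator `g` of the Klein four group. -/
def kg : K4 := Multiplicative.ofAdd (1, 0)

/-- The generator `h` of the Klein four group. -/
def kh : K4 := Multiplicative.ofAdd (0, 1)

/-- The underlying `F₂`-vector space of the module `Ω^{-m} F₂`: basis vectors
`e₁, …, e_{m+1}` live in the first factor and `e_{m+2}, …, e_{2m+1}` in the second. -/
abbrev MM (m : ℕ) : Type := (Fin (m + 1) → ZMod 2) × (Fin m → ZMod 2)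

/-- The basis vector `e_{j+1}` (for `0 ≤ j ≤ m`, i.e. `e_i` with `1 ≤ i ≤ m+1`). -/
def ea (m : ℕ) (j : Fin (m + 1)) : MM m := (Pi.single j 1, 0)

/-- The basis vector `e_{m+1+(j+1)}` (for `0 ≤ j ≤ m-1`, i.e. `e_{m+1+i}` with `1 ≤ i ≤ m`). -/
def eb (m : ℕ) (j : Fin m) : MM m := (0, Pi.single j 1)

lemma k4_cases (γ : K4) : γ = (1 : K4) ∨ γ = kg ∨ γ = kh ∨ γ = kg * kh := by
  revert γ; decide

lemma sum_smul_single (n : ℕ) (f : Fin n → ZMod 2) :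
    ∑ j, f j • (Pi.single j 1 : Fin n → ZMod 2) = f := by
  have h : ∀ j : Fin n, f j • (Pi.single j 1 : Fin n → ZMod 2) = Pi.single j (f j) := by
    intro j; rw [← Pi.single_smul, smul_eq_mul, mul_one]
  simp_rw [h]
  exact Finset.univ_sum_single f

lemma eval_single_sum' {n N : ℕ} (σ : Fin n → Fin N) (b : Fin n → ZMod 2) (i : Fin N)
    (k : Fin n) (hk : σ k = i) (huniq : ∀ j, σ j = i → j = k) :
    (∑ j, (Pi.single (σ j) (b j) : Fin N → ZMod 2)) i = b k := by
  subst hk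
  rw [Finset.sum_apply, Finset.sum_eq_single k]
  · simp
  · intro j _ hj
    exact Pi.single_eq_of_ne (fun h => hj (huniq j h.symm)) _
  · simp

lemma eval_single_sum_zero {n N : ℕ} (σ : Fin n → Fin N) (b : Fin n → ZMod 2) (i : Fin N)
    (hi : ∀ j, σ j ≠ i) :
    (∑ j, (Pi.single (σ j) (b j) : Fin N → ZMod 2)) i = 0 := by
  rw [Finset.sum_apply]
  exact Finset.sum_eq_zero fun j _ => Pi.single_eq_of_ne (fun h => hi j h.symm) _

/-- Let `G = ℤ/2 × ℤ/2` act on `M = Ω^{-m} F₂` by: `g·e_i = e_i` and `h·e_i = e_i` for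
`1 ≤ i ≤ m+1`; `g·e_{m+1+i} = e_i + e_{m+1+i}` and `h·e_{m+1+i} = e_{i+1} + e_{m+1+i}`
for `1 ≤ i ≤ m`.  Then the invariants `M^G` are the `F₂`-span of `e₁, …, e_{m+1}`, and
for each of the three subgroups `H₁ = ⟨g⟩`, `H₂ = ⟨h⟩`, `H₃ = ⟨gh⟩` of order 2, the
fixed subspace `M^{H_a}` also equals the `F₂`-span of `e₁, …, e_{m+1}`. -/
theorem stmt_6 (m : ℕ) (hm : 1 ≤ m)
    (ρ : Representation (ZMod 2) K4 (MM m))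
    (hga : ∀ j : Fin (m + 1), ρ kg (ea m j) = ea m j)
    (hha : ∀ j : Fin (m + 1), ρ kh (ea m j) = ea m j)
    (hgb : ∀ j : Fin m, ρ kg (eb m j) = ea m j.castSucc + eb m j)
    (hhb : ∀ j : Fin m, ρ kh (eb m j) = ea m j.succ + eb m j) :
    {x : MM m | ∀ γ : K4, ρ γ x = x}
      = ↑(Submodule.span (ZMod 2) (Set.range (ea m))) ∧
    ∀ γ₀ ∈ ({kg, kh, kg * kh} : Set K4),
      {x : MM m | ∀ γ ∈ Subgroup.zpowers γ₀, ρ γ x = x}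
        = ↑(Submodule.span (ZMod 2) (Set.range (ea m))) := by
  -- sums of scaled basis vectors
  have hsum_ea : ∀ f : Fin (m + 1) → ZMod 2, (∑ j, f j • ea m j) = (f, 0) := by
    intro f
    rw [Prod.ext_iff]
    constructor
    · rw [Prod.fst_sum]
      simpa [ea] using sum_smul_single (m + 1) f
    · rw [Prod.snd_sum]
      simp [ea]
  have hsum_eb : ∀ f : Fin m → ZMod 2, (∑ j, f j • eb m j) = (0, f) := by
    intro f
    rw [Prod.ext_iff]
    constructor
    · rw [Prod.fst_sum]; simp [eb]
    · rw [Prod.snd_sum]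
      simpa [eb] using sum_smul_single m f
  have hdecomp : ∀ x : MM m,
      x = (∑ j, x.1 j • ea m j) + (∑ j, x.2 j • eb m j) := by
    intro x
    rw [hsum_ea, hsum_eb]
    ext <;> simp
  -- first components of sums over ea ∘ σ
  have hsum_fst : ∀ (σ : Fin m → Fin (m + 1)) (b : Fin m → ZMod 2),
      (∑ j, b j • ea m (σ j)).1 = ∑ j, (Pi.single (σ j) (b j) : Fin (m + 1) → ZMod 2) := by
    intro σ b
    rw [Prod.fst_sum]
    refine Finset.sum_congr rfl fun j _ => ?_
    simp only [ea, Prod.smul_fst]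
    rw [← Pi.single_smul, smul_eq_mul, mul_one]
  -- vanishing criterion for injective index maps
  have hzero : ∀ (σ : Fin m → Fin (m + 1)), Function.Injective σ →
      ∀ b : Fin m → ZMod 2, (∑ j, b j • ea m (σ j)) = 0 → b = 0 := by
    intro σ hσ b hb
    have h1 : (∑ j, (Pi.single (σ j) (b j) : Fin (m + 1) → ZMod 2)) = 0 := by
      rw [← hsum_fst σ b, hb]; rfl
    funext k
    have h2 := congrFun h1 (σ k)
    rw [eval_single_sum' σ b (σ k) k rfl (fun j h => hσ h)] at h2
    simpa using h2
  -- vanishing criterion for the gh case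
  have hghzero : ∀ b : Fin m → ZMod 2,
      (∑ j, b j • ea m j.succ) + (∑ j, b j • ea m j.castSucc) = 0 → b = 0 := by
    intro b hb
    have h1 : (∑ j, (Pi.single (Fin.succ j) (b j) : Fin (m + 1) → ZMod 2))
        + (∑ j, (Pi.single (Fin.castSucc j) (b j) : Fin (m + 1) → ZMod 2)) = 0 := by
      have := congrArg Prod.fst hb
      rw [Prod.fst_add, hsum_fst, hsum_fst] at this
      exact this
    have key : ∀ n : ℕ, ∀ hn : n < m, b ⟨n, hn⟩ = 0 := by
      intro n
      induction n with
      | zero =>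
        intro hn
        have h2 := congrFun h1 (Fin.castSucc ⟨0, hn⟩)
        rw [Pi.add_apply,
          eval_single_sum_zero (Fin.succ) b _ (fun j h => by
            have := congrArg Fin.val h
            simp at this),
          eval_single_sum' (Fin.castSucc) b _ ⟨0, hn⟩ rfl
            (fun j h => Fin.castSucc_injective m h)] at h2
        simpa using h2
      | succ n ih =>
        intro hn
        have hn' : n < m := Nat.lt_of_succ_lt hn
        have h2 := congrFun h1 (Fin.castSucc ⟨n + 1, hn⟩)
        rw [Pi.add_apply,
          eval_single_sum' (Fin.succ) b _ ⟨n, hn'⟩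
            (by ext; simp)
            (fun j h => by
              have := congrArg Fin.val h
              simp at this
              exact Fin.ext this),
          eval_single_sum' (Fin.castSucc) b _ ⟨n + 1, hn⟩ rfl
            (fun j h => Fin.castSucc_injective m h)] at h2
        rw [ih hn'] at h2
        simpa using h2
    funext k
    obtain ⟨n, hn⟩ := k
    exact key n hn
  -- explicit formulas for the action
  have rg : ∀ x : MM m, ρ kg x =
      (∑ j, x.1 j • ea m j) + ((∑ j, x.2 j • ea m j.castSucc) + ∑ j, x.2 j • eb m j) := by
    intro x
    conv_lhs => rw [hdecomp x]
    rw [map_add, map_sum, map_sum]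
    simp_rw [map_smul, hga, hgb, smul_add]
    rw [Finset.sum_add_distrib]
  have rh : ∀ x : MM m, ρ kh x =
      (∑ j, x.1 j • ea m j) + ((∑ j, x.2 j • ea m j.succ) + ∑ j, x.2 j • eb m j) := by
    intro x
    conv_lhs => rw [hdecomp x]
    rw [map_add, map_sum, map_sum]
    simp_rw [map_smul, hha, hhb, smul_add]
    rw [Finset.sum_add_distrib]
  have rgh : ∀ x : MM m, ρ (kg * kh) x =
      (∑ j, x.1 j • ea m j) +
        (((∑ j, x.2 j • ea m j.succ) + (∑ j, x.2 j • ea m j.castSucc)) + ∑ j, x.2 j • eb m j) := by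
    intro x
    rw [map_mul, Module.End.mul_apply, rh x, map_add, map_add, map_sum, map_sum, map_sum]
    simp_rw [map_smul, hga, hgb, smul_add]
    rw [Finset.sum_add_distrib]
    abel
  -- fixed points imply vanishing second component
  have fix_g : ∀ x : MM m, ρ kg x = x → x.2 = 0 := by
    intro x h
    rw [rg x] at h
    conv_rhs at h => rw [hdecomp x]
    have h1 := add_left_cancel h
    rw [add_eq_right] at h1
    exact hzero Fin.castSucc (Fin.castSucc_injective m) x.2 h1
  have fix_h : ∀ x : MM m, ρ kh x = x → x.2 = 0 := by
    intro x h
    rw [rh x] at h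
    conv_rhs at h => rw [hdecomp x]
    have h1 := add_left_cancel h
    rw [add_eq_right] at h1
    exact hzero Fin.succ (Fin.succ_injective m) x.2 h1
  have fix_gh : ∀ x : MM m, ρ (kg * kh) x = x → x.2 = 0 := by
    intro x h
    rw [rgh x] at h
    conv_rhs at h => rw [hdecomp x]
    have h1 := add_left_cancel h
    rw [add_eq_right] at h1
    exact hghzero x.2 h1
  -- membership in the span
  have hmem : ∀ x : MM m, x.2 = 0 →
      x ∈ Submodule.span (ZMod 2) (Set.range (ea m)) := by
    intro x hx
    have : x = ∑ j, x.1 j • ea m j := by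
      rw [hsum_ea]; ext <;> simp [hx]
    rw [this]
    exact Submodule.sum_mem _ fun j _ =>
      Submodule.smul_mem _ _ (Submodule.subset_span ⟨j, rfl⟩)
  -- span is fixed by every group element
  have hall : ∀ (γ : K4) (x : MM m),
      x ∈ Submodule.span (ZMod 2) (Set.range (ea m)) → ρ γ x = x := by
    have key : ∀ γ : K4, (∀ j, ρ γ (ea m j) = ea m j) →
        ∀ x ∈ Submodule.span (ZMod 2) (Set.range (ea m)), ρ γ x = x := by
      intro γ hγ x hx
      have hle : Submodule.span (ZMod 2) (Set.range (ea m)) ≤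
          LinearMap.ker (ρ γ - LinearMap.id) := by
        rw [Submodule.span_le]
        rintro _ ⟨j, rfl⟩
        simp [LinearMap.mem_ker, LinearMap.sub_apply, hγ j, sub_eq_zero]
      have h2 := hle hx
      rw [LinearMap.mem_ker, LinearMap.sub_apply, sub_eq_zero] at h2
      simpa using h2
    intro γ x hx
    rcases k4_cases γ with h | h | h | h <;> subst h
    · simp
    · exact key kg hga x hx
    · exact key kh hha x hx
    · refine key (kg * kh) (fun j => ?_) x hx
      rw [map_mul, Module.End.mul_apply, hha j, hga j]
  constructor
  · ext x
    simp only [Set.mem_setOf_eq, SetLike.mem_coe]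
    constructor
    · intro h
      exact hmem x (fix_g x (h kg))
    · intro hx γ
      exact hall γ x hx
  · intro γ₀ hγ₀
    ext x
    simp only [Set.mem_setOf_eq, SetLike.mem_coe]
    constructor
    · intro h
      have h0 := h γ₀ (Subgroup.mem_zpowers γ₀)
      rcases hγ₀ with h' | h' | h' <;> subst h'
      · exact hmem x (fix_g x h0)
      · exact hmem x (fix_h x h0)
      · exact hmem x (fix_gh x h0)
    · intro hx γ _
      exact hall γ x hx
end

section
/- With G, M, B, φ, A, and the elements s_j as in the context: the 5m+1 elements s₁, …, s_{5m+1} form a ℤ-basis of A ≅ ℤ^{5m+1}. Moreover, a ℤ-basis of A^G is given by s_{m+1}, …, s_{2m+1} together with the elements 2s_i + s_{2m+1+i} + s_{3m+1+i} + s_{4m+1+i} for 1 ≤ i ≤ m (so A^G has rank 2m+1); a ℤ-basis of A^{H₁} is given by the above basis of A^G together with s_i + s_{2m+1+i} for 1 ≤ i ≤ m; a ℤ-basis of A^{H₂} is given by the basis of A^G together with s_i + s_{3m+1+i} for 1 ≤ i ≤ m; and a ℤ-basis of A^{H₃} is given by the basis of A^G together with s_i + s_{4m+1+i} for 1 ≤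 i ≤ m (so each A^{H_a} has rank 3m+1). -/
/-- The permutation `ℤ[G]`-module `B = (ℤ[G])^{⊕ m} ⊕ ℤ^{⊕ (m+1)}`. -/
abbrev BB (m : ℕ) : Type := (Fin m → MonoidAlgebra ℤ K4) × (Fin (m + 1) → ℤ)

/-- The `ℤ[G]`-module generator `f_{i+1}` of the `(i+1)`-st free summand of `B`
(for `0 ≤ i ≤ m-1`, i.e. `f_i` with `1 ≤ i ≤ m`). -/
noncomputable def fa (m : ℕ) (i : Fin m) : BB m := (Pi.single i 1, 0)

/-- The generator `f_{m+(j+1)}` of the `(j+1)`-st trivial summand of `B`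
(for `0 ≤ j ≤ m`, i.e. `f_{m+i}` with `1 ≤ i ≤ m+1`). -/
noncomputable def fb (m : ℕ) (j : Fin (m + 1)) : BB m := (0, Pi.single j 1)

/-- The action of `γ ∈ G` on `B`: left multiplication on each `ℤ[G]`-summand and the
trivial action on each `ℤ`-summand. -/
noncomputable def bAct (m : ℕ) (γ : K4) (b : BB m) : BB m :=
  (fun i => MonoidAlgebra.of ℤ K4 γ * b.1 i, b.2)

/-- The elements `s₁, …, s_{2m+1}`, namely `s_i = 2·f_i`; the index `Sum.inl i`
corresponds to `s_{i+1}` for `0 ≤ i ≤ m-1`, and `Sum.inr j` to `s_{m+(j+1)}`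
for `0 ≤ j ≤ m`. -/
noncomputable def s1 (m : ℕ) : (Fin m ⊕ Fin (m + 1)) → BB m :=
  Sum.elim (fun i => (2 : ℤ) • fa m i) (fun j => (2 : ℤ) • fb m j)

/-- The element `s_{2m+1+(i+1)} = g·f_{i+1} − f_{i+1} − f_{m+(i+1)}` (for `0 ≤ i ≤ m-1`). -/
noncomputable def s2 (m : ℕ) (i : Fin m) : BB m :=
  bAct m kg (fa m i) - fa m i - fb m i.castSucc

/-- The element `s_{3m+1+(i+1)} = h·f_{i+1} − f_{i+1} − f_{m+1+(i+1)}` (for `0 ≤ i ≤ m-1`). -/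
noncomputable def s3 (m : ℕ) (i : Fin m) : BB m :=
  bAct m kh (fa m i) - fa m i - fb m i.succ

/-- The element `s_{4m+1+(i+1)} = (gh)·f_{i+1} − f_{i+1} − f_{m+(i+1)} − f_{m+1+(i+1)}`
(for `0 ≤ i ≤ m-1`). -/
noncomputable def s4 (m : ℕ) (i : Fin m) : BB m :=
  bAct m (kg * kh) (fa m i) - fa m i - fb m i.castSucc - fb m i.succ

/-- The full family `s₁, …, s_{5m+1}` (indexed by a type of cardinality `5m+1`). -/
noncomputable def sAll (m : ℕ) : ((Fin m ⊕ Fin (m + 1)) ⊕ (Fin m ⊕ Fin m ⊕ Fin m)) → BB m :=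
  Sum.elim (s1 m) (Sum.elim (s2 m) (Sum.elim (s3 m) (s4 m)))

/-- The claimed basis of `A^G`: `s_{m+1}, …, s_{2m+1}` together with the elements
`2s_i + s_{2m+1+i} + s_{3m+1+i} + s_{4m+1+i}` for `1 ≤ i ≤ m`. -/
noncomputable def tG (m : ℕ) : (Fin (m + 1) ⊕ Fin m) → BB m :=
  Sum.elim (fun j => s1 m (Sum.inr j))
    (fun i => (2 : ℤ) • s1 m (Sum.inl i) + s2 m i + s3 m i + s4 m i)

/-- The claimed basis of `A^{H_a}`: the basis of `A^G` together with an extra family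
`w` (namely `s_i + s_{2m+1+i}`, resp. `s_i + s_{3m+1+i}`, resp. `s_i + s_{4m+1+i}`,
for `1 ≤ i ≤ m`). -/
noncomputable def tH (m : ℕ) (w : Fin m → BB m) : ((Fin (m + 1) ⊕ Fin m) ⊕ Fin m) → BB m :=
  Sum.elim (tG m) w

section helpers
variable {m : ℕ}

lemma K4_cases : ∀ γ : K4, γ = 1 ∨ γ = kg ∨ γ = kh ∨ γ = kg * kh := by decide

lemma K4_inv : ∀ γ : K4, γ⁻¹ = γ := by decide

lemma bAct_add (γ : K4) (a b : BB m) : bAct m γ (a + b) = bAct m γ a + bAct m γ b := by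
  unfold bAct
  refine Prod.ext ?_ rfl
  funext i
  simp [mul_add]

lemma bAct_smul (γ : K4) (c : ℤ) (b : BB m) : bAct m γ (c • b) = c • bAct m γ b := by
  unfold bAct
  refine Prod.ext ?_ rfl
  funext i
  simp [mul_smul_comm, mul_left_comm]

lemma bAct_zero (γ : K4) : bAct m γ (0 : BB m) = 0 := by
  unfold bAct
  refine Prod.ext ?_ rfl
  funext i
  simp

lemma bAct_sub (γ : K4) (a b : BB m) : bAct m γ (a - b) = bAct m γ a - bAct m γ b := by
  unfold bAct
  refine Prod.ext ?_ rfl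
  funext i
  simp [mul_sub]

lemma bAct_one (b : BB m) : bAct m 1 b = b := by
  unfold bAct
  refine Prod.ext ?_ rfl
  funext i
  simp [MonoidAlgebra.of_apply, ← MonoidAlgebra.one_def]

lemma bAct_mul (γ δ : K4) (b : BB m) : bAct m γ (bAct m δ b) = bAct m (γ * δ) b := by
  unfold bAct
  refine Prod.ext ?_ rfl
  funext i
  simp [← mul_assoc, ← map_mul]

lemma bAct_fb (γ : K4) (j : Fin (m+1)) : bAct m γ (fb m j) = fb m j := by
  unfold bAct fb
  refine Prod.ext ?_ rfl
  funext i
  simp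

lemma bAct_fa (γ : K4) (i : Fin m) : bAct m γ (fa m i) =
    (Pi.single i (MonoidAlgebra.single γ 1), 0) := by
  unfold bAct fa
  refine Prod.ext ?_ rfl
  funext i'
  by_cases h : i' = i
  · subst h; simp [MonoidAlgebra.of_apply, MonoidAlgebra.single_mul_single]
  · simp [Pi.single_apply, h]


/-- Stabilizer of `b` in `K4` under `bAct`. -/
def stab (m : ℕ) (b : BB m) : Subgroup K4 where
  carrier := {γ | bAct m γ b = b}
  one_mem' := bAct_one b
  mul_mem' := by
    intro x y hx hy
    show bAct m (x * y) b = b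
    rw [← bAct_mul, hy, hx]
  inv_mem' := by
    intro x hx
    show bAct m x⁻¹ b = b
    rw [K4_inv]; exact hx

/-- coordinate functionals -/
noncomputable def cx (m : ℕ) (i : Fin m) (γ : K4) : BB m →ₗ[ℤ] ℤ :=
  (Finsupp.lapply γ).comp ((MonoidAlgebra.coeffLinearEquiv ℤ).toLinearMap.comp
    ((LinearMap.proj (φ := fun _ : Fin m => MonoidAlgebra ℤ K4) i).comp (LinearMap.fst ℤ _ _)))

noncomputable def cy (m : ℕ) (j : Fin (m + 1)) : BB m →ₗ[ℤ] ℤ :=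
  (LinearMap.proj j).comp (LinearMap.snd ℤ _ _)

lemma cx_apply (i : Fin m) (γ : K4) (b : BB m) : cx m i γ b = (b.1 i).coeff γ := rfl
lemma cy_apply (j : Fin (m+1)) (b : BB m) : cy m j b = b.2 j := rfl

@[simp] lemma cx_fa (i i' : Fin m) (γ : K4) :
    cx m i γ (fa m i') = if i = i' then (if γ = 1 then 1 else 0) else 0 := by
  rw [cx_apply]
  unfold fa
  simp [Pi.single_apply, MonoidAlgebra.one_def, MonoidAlgebra.coeff_single, Finsupp.single_apply, apply_ite (fun f : MonoidAlgebra ℤ K4 => f.coeff γ), eq_comm (a := (1:K4))]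

@[simp] lemma cx_fb (i : Fin m) (γ : K4) (j : Fin (m+1)) : cx m i γ (fb m j) = 0 := by simp [cx_apply, fb]

@[simp] lemma cx_bAct_fa (i i' : Fin m) (γ δ : K4) :
    cx m i γ (bAct m δ (fa m i')) = if i = i' then (if γ = δ then 1 else 0) else 0 := by
  rw [bAct_fa, cx_apply]
  simp [Pi.single_apply, MonoidAlgebra.coeff_single, Finsupp.single_apply, apply_ite (fun f : MonoidAlgebra ℤ K4 => f.coeff γ), eq_comm (a := δ)]

@[simp] lemma cy_fa (j : Fin (m+1)) (i : Fin m) : cy m j (fa m i) = 0 := rfl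

@[simp] lemma cy_bAct_fa (j : Fin (m+1)) (δ : K4) (i : Fin m) :
    cy m j (bAct m δ (fa m i)) = 0 := rfl

@[simp] lemma cy_fb (j j' : Fin (m+1)) : cy m j (fb m j') = if j = j' then 1 else 0 := by
  rw [cy_apply]
  unfold fb
  simp [Pi.single_apply]


lemma BB_ext (a b : BB m) (h1 : ∀ i γ, cx m i γ a = cx m i γ b)
    (h2 : ∀ j, cy m j a = cy m j b) : a = b := by
  refine Prod.ext ?_ ?_
  · funext i; exact MonoidAlgebra.coeff_injective (Finsupp.ext fun γ => h1 i γ)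
  · funext j; exact h2 j

noncomputable def combo (m : ℕ) (A B C U : Fin m → ℤ) (V : Fin (m+1) → ℤ) : BB m :=
  (∑ i, A i • s2 m i) + (∑ i, B i • s3 m i) + (∑ i, C i • s4 m i)
    + (∑ i, U i • fa m i) + (∑ j, V j • fb m j)

def Uc (b : BB m) (i : Fin m) : ℤ := (b.1 i).coeff 1 + (b.1 i).coeff kg + (b.1 i).coeff kh + (b.1 i).coeff (kg * kh)

def Vc (b : BB m) (j : Fin (m+1)) : ℤ :=
  b.2 j + (∑ i, ((b.1 i).coeff kg + (b.1 i).coeff (kg * kh)) * (if j = i.castSucc then 1 else 0))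
    + (∑ i, ((b.1 i).coeff kh + (b.1 i).coeff (kg * kh)) * (if j = i.succ then 1 else 0))

lemma master (b : BB m) :
    b = combo m (fun i => (b.1 i).coeff kg) (fun i => (b.1 i).coeff kh) (fun i => (b.1 i).coeff (kg * kh))
      (Uc b) (Vc b) := by
  have n1 : (kg : K4) ≠ 1 := by decide
  have n2 : (kh : K4) ≠ 1 := by decide
  have n3 : (kg * kh : K4) ≠ 1 := by decide
  have n4 : (kg : K4) ≠ kh := by decide
  have n5 : (kg : K4) ≠ kg * kh := by decide
  have n6 : (kh : K4) ≠ kg * kh := by decide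
  refine BB_ext _ _ ?_ ?_
  · intro i γ
    rw [cx_apply]
    simp only [combo, map_add, map_sum, map_smul, s2, s3, s4, map_sub,
      cx_fa, cx_fb, cx_bAct_fa, smul_eq_mul, mul_ite, mul_one, mul_zero, mul_sub,
      Finset.sum_ite_eq, Finset.mem_univ, if_true, Finset.sum_sub_distrib,
      Finset.sum_const_zero, sub_zero, zero_sub]
    rcases K4_cases γ with h | h | h | h <;> subst h <;>
      simp [n1, n2, n3, n4, n5, n6, n1.symm, n2.symm, n3.symm, n4.symm, n5.symm, n6.symm, Uc] <;>
      ring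
  · intro j
    rw [cy_apply]
    simp only [combo, map_add, map_sum, map_smul, s2, s3, s4, map_sub,
      cy_fa, cy_fb, cy_bAct_fa, smul_eq_mul, mul_ite, mul_one, mul_zero, mul_sub,
      Finset.sum_ite_eq, Finset.mem_univ, if_true, Finset.sum_sub_distrib,
      Finset.sum_const_zero, sub_zero, zero_sub]
    have hsplit : ∀ (c : Prop) (h : Decidable c) (a b : ℤ),
        (if c then a + b else 0) = (if c then a else 0) + (if c then b else 0) := by
      intros c h a b; split <;> simp
    simp only [Vc, hsplit, mul_neg, neg_neg, Finset.sum_add_distrib, mul_ite, mul_one, mul_zero,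
      Finset.sum_neg_distrib]
    ring


lemma mm_two (x : MM m) : (2 : ℤ) • x = 0 := by
  have h2 : ∀ a : ZMod 2, a + a = 0 := by decide
  rw [two_zsmul]
  refine Prod.ext ?_ ?_ <;> funext t <;> simp [h2]

section phi
variable (ρ : Representation (ZMod 2) K4 (MM m))
    (hga : ∀ j : Fin (m + 1), ρ kg (ea m j) = ea m j)
    (hha : ∀ j : Fin (m + 1), ρ kh (ea m j) = ea m j)
    (hgb : ∀ j : Fin m, ρ kg (eb m j) = ea m j.castSucc + eb m j)
    (hhb : ∀ j : Fin m, ρ kh (eb m j) = ea m j.succ + eb m j)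
    (φ : BB m →+ MM m)
    (hequiv : ∀ (γ : K4) (b : BB m), φ (bAct m γ b) = ρ γ (φ b))
    (hfa : ∀ i : Fin m, φ (fa m i) = eb m i)
    (hfb : ∀ j : Fin (m + 1), φ (fb m j) = ea m j)

include hequiv hfa hfb

lemma phi_s1 (k : Fin m ⊕ Fin (m+1)) : φ (s1 m k) = 0 := by
  cases k with
  | inl i => show φ ((2:ℤ) • fa m i) = 0; rw [map_zsmul, hfa, mm_two]
  | inr j => show φ ((2:ℤ) • fb m j) = 0; rw [map_zsmul, hfb, mm_two]

include hgb in
lemma phi_s2 (i : Fin m) : φ (s2 m i) = 0 := by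
  unfold s2
  rw [map_sub, map_sub, hequiv, hfa, hfb, hgb]
  abel

include hhb in
lemma phi_s3 (i : Fin m) : φ (s3 m i) = 0 := by
  unfold s3
  rw [map_sub, map_sub, hequiv, hfa, hfb, hhb]
  abel

include hga hgb hhb in
lemma phi_s4 (i : Fin m) : φ (s4 m i) = 0 := by
  unfold s4
  have : ρ (kg * kh) (eb m i) = ea m i.succ + ea m i.castSucc + eb m i := by
    rw [map_mul]
    show ρ kg (ρ kh (eb m i)) = _
    rw [hhb, map_add, hga, hgb]
    abel
  rw [map_sub, map_sub, map_sub, hequiv, hfa, hfb, hfb, this]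
  abel

include hgb hhb hga in
lemma phi_combo (A B C U : Fin m → ℤ) (V : Fin (m+1) → ℤ) :
    φ (combo m A B C U V) = (∑ i, U i • eb m i) + (∑ j, V j • ea m j) := by
  unfold combo
  rw [map_add, map_add, map_add, map_add]
  have hsum : ∀ (n : ℕ) (c : Fin n → ℤ) (v : Fin n → BB m),
      φ (∑ i, c i • v i) = ∑ i, c i • φ (v i) := by
    intro n c v
    rw [map_sum]
    exact Finset.sum_congr rfl fun i _ => map_zsmul φ _ _
  rw [hsum, hsum, hsum, hsum, hsum]
  simp only [phi_s2 ρ hgb φ hequiv hfa hfb, phi_s3 ρ hhb φ hequiv hfa hfb,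
    phi_s4 ρ hga hgb hhb φ hequiv hfa hfb, hfa, hfb, smul_zero,
    Finset.sum_const_zero]
  abel

end phi

lemma mm_coords (U : Fin m → ℤ) (V : Fin (m+1) → ℤ)
    (h : (∑ i, U i • eb m i) + (∑ j, V j • ea m j) = (0 : MM m)) :
    (∀ i, 2 ∣ U i) ∧ (∀ j, 2 ∣ V j) := by
  constructor
  · intro i
    have := congrArg (fun z : MM m => z.2 i) h
    simp only [Prod.snd_add, Prod.snd_sum, ea, eb, Prod.smul_mk, Prod.snd_zero,
      Finset.sum_apply, Pi.add_apply, Pi.smul_apply, smul_zero, Pi.zero_apply,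
      Finset.sum_const_zero, add_zero, Pi.single_apply, smul_ite,
      Finset.sum_ite_eq', Finset.sum_ite_eq, Finset.mem_univ, if_true] at this
    rw [zsmul_eq_mul, mul_one] at this
    exact_mod_cast (ZMod.intCast_zmod_eq_zero_iff_dvd _ 2).mp this
  · intro j
    have := congrArg (fun z : MM m => z.1 j) h
    simp only [Prod.fst_add, Prod.fst_sum, ea, eb, Prod.smul_mk, Prod.fst_zero,
      Finset.sum_apply, Pi.add_apply, Pi.smul_apply, smul_zero, Pi.zero_apply,
      Finset.sum_const_zero, zero_add, Pi.single_apply, smul_ite,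
      Finset.sum_ite_eq', Finset.sum_ite_eq, Finset.mem_univ, if_true] at this
    rw [zsmul_eq_mul, mul_one] at this
    exact_mod_cast (ZMod.intCast_zmod_eq_zero_iff_dvd _ 2).mp this


lemma fix_coeff {δ : K4} {b : BB m} (hb : bAct m δ b = b) (i : Fin m) (γ : K4) :
    (b.1 i).coeff (δ * γ) = (b.1 i).coeff γ := by
  have h1 : MonoidAlgebra.of ℤ K4 δ * b.1 i = b.1 i := congrFun (congrArg Prod.fst hb) i
  have h2 := congrArg (fun f : MonoidAlgebra ℤ K4 => f.coeff (δ * γ)) h1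
  simp only [MonoidAlgebra.of_apply, MonoidAlgebra.coeff_single_mul_mul, one_mul,
    inv_mul_cancel_left] at h2
  rw [← h2]

lemma tG_inr_eq (i : Fin m) :
    tG m (Sum.inr i) = fa m i + bAct m kg (fa m i) + bAct m kh (fa m i)
      + bAct m (kg * kh) (fa m i) - (2:ℤ) • fb m i.castSucc - (2:ℤ) • fb m i.succ := by
  show (2:ℤ) • s1 m (Sum.inl i) + s2 m i + s3 m i + s4 m i = _
  unfold s1 s2 s3 s4
  simp only [Sum.elim_inl]
  module

lemma tG_fixed (γ : K4) (k : Fin (m+1) ⊕ Fin m) : bAct m γ (tG m k) = tG m k := by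
  cases k with
  | inl j =>
    show bAct m γ ((2:ℤ) • fb m j) = (2:ℤ) • fb m j
    rw [bAct_smul, bAct_fb]
  | inr i =>
    rw [tG_inr_eq, bAct_sub, bAct_sub, bAct_add, bAct_add, bAct_add,
      bAct_smul, bAct_smul, bAct_fb, bAct_fb, bAct_mul, bAct_mul, bAct_mul]
    rcases K4_cases γ with h | h | h | h <;> subst h
    · rw [bAct_one, one_mul, one_mul, one_mul]
    · rw [show kg * kg = (1:K4) from by decide, show kg * (kg * kh) = (kh:K4) from by decide,
        bAct_one]
      abel
    · rw [show kh * kg = (kg * kh :K4) from by decide, show kh * kh = (1:K4) from by decide,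
        show kh * (kg * kh) = (kg:K4) from by decide, bAct_one]
      abel
    · rw [show (kg * kh) * kg = (kh:K4) from by decide,
        show (kg * kh) * kh = (kg:K4) from by decide,
        show (kg * kh) * (kg * kh) = (1:K4) from by decide, bAct_one]
      abel

lemma w2_eq (i : Fin m) : s1 m (Sum.inl i) + s2 m i
    = fa m i + bAct m kg (fa m i) - fb m i.castSucc := by
  show (2:ℤ) • fa m i + s2 m i = _
  unfold s2; module

lemma w3_eq (i : Fin m) : s1 m (Sum.inl i) + s3 m i
    = fa m i + bAct m kh (fa m i) - fb m i.succ := by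
  show (2:ℤ) • fa m i + s3 m i = _
  unfold s3; module

lemma w4_eq (i : Fin m) : s1 m (Sum.inl i) + s4 m i
    = fa m i + bAct m (kg * kh) (fa m i) - fb m i.castSucc - fb m i.succ := by
  show (2:ℤ) • fa m i + s4 m i = _
  unfold s4; module

lemma w2_fixed (i : Fin m) : bAct m kg (s1 m (Sum.inl i) + s2 m i) = s1 m (Sum.inl i) + s2 m i := by
  rw [w2_eq, bAct_sub, bAct_add, bAct_fb, bAct_mul, show kg * kg = (1:K4) from by decide, bAct_one]
  abel

lemma w3_fixed (i : Fin m) : bAct m kh (s1 m (Sum.inl i) + s3 m i) = s1 m (Sum.inl i) + s3 m i := by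
  rw [w3_eq, bAct_sub, bAct_add, bAct_fb, bAct_mul, show kh * kh = (1:K4) from by decide, bAct_one]
  abel

lemma w4_fixed (i : Fin m) : bAct m (kg * kh) (s1 m (Sum.inl i) + s4 m i)
    = s1 m (Sum.inl i) + s4 m i := by
  rw [w4_eq, bAct_sub, bAct_sub, bAct_add, bAct_fb, bAct_fb, bAct_mul,
    show (kg * kh) * (kg * kh) = (1:K4) from by decide, bAct_one]
  abel


lemma combo_eq_sum (A B C U : Fin m → ℤ) (V : Fin (m+1) → ℤ) :
    combo m A B C U V
      = (∑ i, (A i • s2 m i + B i • s3 m i + C i • s4 m i + U i • fa m i))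
        + ∑ j, V j • fb m j := by
  unfold combo
  rw [Finset.sum_add_distrib, Finset.sum_add_distrib, Finset.sum_add_distrib]

lemma comboG (α : Fin m → ℤ) (v : Fin (m+1) → ℤ) :
    combo m α α α (fun i => α i + α i + α i + α i) (fun j => 2 * v j)
      = (∑ i, α i • tG m (Sum.inr i)) + ∑ j, v j • tG m (Sum.inl j) := by
  rw [combo_eq_sum]
  congr 1
  · refine Finset.sum_congr rfl fun i _ => ?_
    simp only [tG, Sum.elim_inr, s1, Sum.elim_inl]
    module
  · refine Finset.sum_congr rfl fun j _ => ?_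
    simp only [tG, Sum.elim_inl, s1, Sum.elim_inr]
    module

lemma comboH1 (α β : Fin m → ℤ) (v : Fin (m+1) → ℤ) :
    combo m α β β (fun i => α i + α i + β i + β i) (fun j => 2 * v j)
      = (∑ i, (β i • tG m (Sum.inr i) + (α i - β i) • (s1 m (Sum.inl i) + s2 m i)))
        + ∑ j, v j • tG m (Sum.inl j) := by
  rw [combo_eq_sum]
  congr 1
  · refine Finset.sum_congr rfl fun i _ => ?_
    simp only [tG, Sum.elim_inr, s1, Sum.elim_inl]
    module
  · refine Finset.sum_congr rfl fun j _ => ?_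
    simp only [tG, Sum.elim_inl, s1, Sum.elim_inr]
    module

lemma comboH2 (α β : Fin m → ℤ) (v : Fin (m+1) → ℤ) :
    combo m α β α (fun i => β i + α i + β i + α i) (fun j => 2 * v j)
      = (∑ i, (α i • tG m (Sum.inr i) + (β i - α i) • (s1 m (Sum.inl i) + s3 m i)))
        + ∑ j, v j • tG m (Sum.inl j) := by
  rw [combo_eq_sum]
  congr 1
  · refine Finset.sum_congr rfl fun i _ => ?_
    simp only [tG, Sum.elim_inr, s1, Sum.elim_inl]
    module
  · refine Finset.sum_congr rfl fun j _ => ?_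
    simp only [tG, Sum.elim_inl, s1, Sum.elim_inr]
    module

lemma comboH3 (α c : Fin m → ℤ) (v : Fin (m+1) → ℤ) :
    combo m α α c (fun i => c i + α i + α i + c i) (fun j => 2 * v j)
      = (∑ i, (α i • tG m (Sum.inr i) + (c i - α i) • (s1 m (Sum.inl i) + s4 m i)))
        + ∑ j, v j • tG m (Sum.inl j) := by
  rw [combo_eq_sum]
  congr 1
  · refine Finset.sum_congr rfl fun i _ => ?_
    simp only [tG, Sum.elim_inr, s1, Sum.elim_inl]
    module
  · refine Finset.sum_congr rfl fun j _ => ?_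
    simp only [tG, Sum.elim_inl, s1, Sum.elim_inr]
    module


lemma sAll_indep : LinearIndependent ℤ (sAll m) := by
  have n1 : (kg : K4) ≠ 1 := by decide
  have n2 : (kh : K4) ≠ 1 := by decide
  have n3 : (kg * kh : K4) ≠ 1 := by decide
  have n4 : (kg : K4) ≠ kh := by decide
  have n5 : (kg : K4) ≠ kg * kh := by decide
  have n6 : (kh : K4) ≠ kg * kh := by decide
  rw [Fintype.linearIndependent_iff]
  intro c hc
  have key : ∀ (L : BB m →ₗ[ℤ] ℤ), ∑ k, c k * L (sAll m k) = 0 := by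
    intro L
    have h := congrArg L hc
    rw [map_sum, map_zero] at h
    simpa only [map_smul, smul_eq_mul] using h
  have h2 : ∀ i, c (Sum.inr (Sum.inl i)) = 0 := by
    intro i
    have h := key (cx m i kg)
    simp only [Fintype.sum_sum_type, sAll, Sum.elim_inl, Sum.elim_inr, s1, s2, s3, s4,
      map_sub, map_smul, smul_eq_mul, cx_fa, cx_fb, cx_bAct_fa,
      n1, n2, n3, n4, n5, n6, Ne.symm n1, Ne.symm n2, Ne.symm n3, Ne.symm n4,
      Ne.symm n5, Ne.symm n6,
      if_false, if_true, ite_self, mul_ite, mul_one, mul_zero, mul_sub, mul_neg, neg_neg,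
      sub_zero, zero_sub, sub_self,
      Finset.sum_ite_eq, Finset.mem_univ, Finset.sum_const_zero, add_zero, zero_add,
      Finset.sum_neg_distrib] at h
    linarith [h]
  have h3 : ∀ i, c (Sum.inr (Sum.inr (Sum.inl i))) = 0 := by
    intro i
    have h := key (cx m i kh)
    simp only [Fintype.sum_sum_type, sAll, Sum.elim_inl, Sum.elim_inr, s1, s2, s3, s4,
      map_sub, map_smul, smul_eq_mul, cx_fa, cx_fb, cx_bAct_fa,
      n1, n2, n3, n4, n5, n6, Ne.symm n1, Ne.symm n2, Ne.symm n3, Ne.symm n4,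
      Ne.symm n5, Ne.symm n6,
      if_false, if_true, ite_self, mul_ite, mul_one, mul_zero, mul_sub, mul_neg, neg_neg,
      sub_zero, zero_sub, sub_self,
      Finset.sum_ite_eq, Finset.mem_univ, Finset.sum_const_zero, add_zero, zero_add,
      Finset.sum_neg_distrib] at h
    linarith [h]
  have h4 : ∀ i, c (Sum.inr (Sum.inr (Sum.inr i))) = 0 := by
    intro i
    have h := key (cx m i (kg * kh))
    simp only [Fintype.sum_sum_type, sAll, Sum.elim_inl, Sum.elim_inr, s1, s2, s3, s4,
      map_sub, map_smul, smul_eq_mul, cx_fa, cx_fb, cx_bAct_fa,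
      n1, n2, n3, n4, n5, n6, Ne.symm n1, Ne.symm n2, Ne.symm n3, Ne.symm n4,
      Ne.symm n5, Ne.symm n6,
      if_false, if_true, ite_self, mul_ite, mul_one, mul_zero, mul_sub, mul_neg, neg_neg,
      sub_zero, zero_sub, sub_self,
      Finset.sum_ite_eq, Finset.mem_univ, Finset.sum_const_zero, add_zero, zero_add,
      Finset.sum_neg_distrib] at h
    linarith [h]
  have h1 : ∀ i, c (Sum.inl (Sum.inl i)) = 0 := by
    intro i
    have h := key (cx m i 1)
    simp only [Fintype.sum_sum_type, sAll, Sum.elim_inl, Sum.elim_inr, s1, s2, s3, s4,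
      map_sub, map_smul, smul_eq_mul, cx_fa, cx_fb, cx_bAct_fa,
      n1, n2, n3, n4, n5, n6, Ne.symm n1, Ne.symm n2, Ne.symm n3, Ne.symm n4,
      Ne.symm n5, Ne.symm n6,
      if_false, if_true, ite_self, mul_ite, mul_one, mul_zero, mul_sub, mul_neg, neg_neg,
      sub_zero, zero_sub, sub_self,
      Finset.sum_ite_eq, Finset.mem_univ, Finset.sum_const_zero, add_zero, zero_add,
      h2, h3, h4, Finset.sum_neg_distrib] at h
    linarith [h]
  have h5 : ∀ j, c (Sum.inl (Sum.inr j)) = 0 := by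
    intro j
    have h := key (cy m j)
    simp only [Fintype.sum_sum_type, sAll, Sum.elim_inl, Sum.elim_inr, s1, s2, s3, s4,
      map_sub, map_smul, smul_eq_mul, cy_fa, cy_fb, cy_bAct_fa,
      h2, h3, h4,
      if_false, if_true, ite_self, mul_ite, mul_one, mul_zero, mul_sub, mul_neg, neg_neg,
      sub_zero, zero_sub, sub_self,
      Finset.sum_ite_eq, Finset.mem_univ, Finset.sum_const_zero, add_zero, zero_add,
      Finset.sum_neg_distrib] at h
    linarith [h]
  rintro (⟨i | j⟩ | ⟨i | i | i⟩)
  exacts [h1 i, h5 j, h2 i, h3 i, h4 i]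


lemma tH_indep2 : LinearIndependent ℤ (tH m (fun i => s1 m (Sum.inl i) + s2 m i)) := by
  have n1 : (kg : K4) ≠ 1 := by decide
  have n2 : (kh : K4) ≠ 1 := by decide
  have n3 : (kg * kh : K4) ≠ 1 := by decide
  have n4 : (kg : K4) ≠ kh := by decide
  have n5 : (kg : K4) ≠ kg * kh := by decide
  have n6 : (kh : K4) ≠ kg * kh := by decide
  rw [Fintype.linearIndependent_iff]
  intro c hc
  have key : ∀ (L : BB m →ₗ[ℤ] ℤ),
      ∑ k, c k * L (tH m (fun i => s1 m (Sum.inl i) + s2 m i) k) = 0 := by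
    intro L
    have h := congrArg L hc
    rw [map_sum, map_zero] at h
    simpa only [map_smul, smul_eq_mul] using h
  have ht : ∀ i, c (Sum.inl (Sum.inr i)) = 0 := by
    intro i
    have h := key (cx m i kh)
    simp only [Fintype.sum_sum_type, tH, tG, Sum.elim_inl, Sum.elim_inr, s1, s2, s3, s4,
      map_sub, map_add, map_smul, smul_eq_mul, cx_fa, cx_fb, cx_bAct_fa,
      n1, n2, n3, n4, n5, n6, Ne.symm n1, Ne.symm n2, Ne.symm n3, Ne.symm n4,
      Ne.symm n5, Ne.symm n6,
      if_false, if_true, ite_self, mul_ite, mul_one, mul_zero, mul_sub, mul_add, mul_neg,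
      neg_neg, neg_zero, sub_zero, zero_sub, sub_self,
      Finset.sum_ite_eq, Finset.mem_univ, Finset.sum_const_zero, add_zero, zero_add,
      Finset.sum_neg_distrib] at h
    linarith [h]
  have hw : ∀ i, c (Sum.inr i) = 0 := by
    intro i
    have h := key (cx m i kg)
    simp only [Fintype.sum_sum_type, tH, tG, Sum.elim_inl, Sum.elim_inr, s1, s2, s3, s4,
      map_sub, map_add, map_smul, smul_eq_mul, cx_fa, cx_fb, cx_bAct_fa,
      n1, n2, n3, n4, n5, n6, Ne.symm n1, Ne.symm n2, Ne.symm n3, Ne.symm n4,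
      Ne.symm n5, Ne.symm n6, ht,
      if_false, if_true, ite_self, mul_ite, mul_one, mul_zero, mul_sub, mul_add, mul_neg,
      neg_neg, neg_zero, sub_zero, zero_sub, sub_self,
      Finset.sum_ite_eq, Finset.mem_univ, Finset.sum_const_zero, add_zero, zero_add,
      Finset.sum_neg_distrib] at h
    linarith [h]
  have hj : ∀ j, c (Sum.inl (Sum.inl j)) = 0 := by
    intro j
    have h := key (cy m j)
    simp only [Fintype.sum_sum_type, tH, tG, Sum.elim_inl, Sum.elim_inr, s1, s2, s3, s4,
      map_sub, map_add, map_smul, smul_eq_mul, cy_fa, cy_fb, cy_bAct_fa, ht, hw,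
      if_false, if_true, ite_self, mul_ite, mul_one, mul_zero, mul_sub, mul_add, mul_neg,
      neg_neg, neg_zero, sub_zero, zero_sub, sub_self,
      Finset.sum_ite_eq, Finset.mem_univ, Finset.sum_const_zero, add_zero, zero_add,
      Finset.sum_neg_distrib] at h
    linarith [h]
  rintro (⟨j | i⟩ | i)
  exacts [hj j, ht i, hw i]


lemma tH_indep3 : LinearIndependent ℤ (tH m (fun i => s1 m (Sum.inl i) + s3 m i)) := by
  have n1 : (kg : K4) ≠ 1 := by decide
  have n2 : (kh : K4) ≠ 1 := by decide
  have n3 : (kg * kh : K4) ≠ 1 := by decide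
  have n4 : (kg : K4) ≠ kh := by decide
  have n5 : (kg : K4) ≠ kg * kh := by decide
  have n6 : (kh : K4) ≠ kg * kh := by decide
  rw [Fintype.linearIndependent_iff]
  intro c hc
  have key : ∀ (L : BB m →ₗ[ℤ] ℤ),
      ∑ k, c k * L (tH m (fun i => s1 m (Sum.inl i) + s3 m i) k) = 0 := by
    intro L
    have h := congrArg L hc
    rw [map_sum, map_zero] at h
    simpa only [map_smul, smul_eq_mul] using h
  have ht : ∀ i, c (Sum.inl (Sum.inr i)) = 0 := by
    intro i
    have h := key (cx m i kg)
    simp only [Fintype.sum_sum_type, tH, tG, Sum.elim_inl, Sum.elim_inr, s1, s2, s3, s4,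
      map_sub, map_add, map_smul, smul_eq_mul, cx_fa, cx_fb, cx_bAct_fa,
      n1, n2, n3, n4, n5, n6, Ne.symm n1, Ne.symm n2, Ne.symm n3, Ne.symm n4,
      Ne.symm n5, Ne.symm n6,
      if_false, if_true, ite_self, mul_ite, mul_one, mul_zero, mul_sub, mul_add, mul_neg,
      neg_neg, neg_zero, sub_zero, zero_sub, sub_self,
      Finset.sum_ite_eq, Finset.mem_univ, Finset.sum_const_zero, add_zero, zero_add,
      Finset.sum_neg_distrib] at h
    linarith [h]
  have hw : ∀ i, c (Sum.inr i) = 0 := by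
    intro i
    have h := key (cx m i kh)
    simp only [Fintype.sum_sum_type, tH, tG, Sum.elim_inl, Sum.elim_inr, s1, s2, s3, s4,
      map_sub, map_add, map_smul, smul_eq_mul, cx_fa, cx_fb, cx_bAct_fa,
      n1, n2, n3, n4, n5, n6, Ne.symm n1, Ne.symm n2, Ne.symm n3, Ne.symm n4,
      Ne.symm n5, Ne.symm n6, ht,
      if_false, if_true, ite_self, mul_ite, mul_one, mul_zero, mul_sub, mul_add, mul_neg,
      neg_neg, neg_zero, sub_zero, zero_sub, sub_self,
      Finset.sum_ite_eq, Finset.mem_univ, Finset.sum_const_zero, add_zero, zero_add,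
      Finset.sum_neg_distrib] at h
    linarith [h]
  have hj : ∀ j, c (Sum.inl (Sum.inl j)) = 0 := by
    intro j
    have h := key (cy m j)
    simp only [Fintype.sum_sum_type, tH, tG, Sum.elim_inl, Sum.elim_inr, s1, s2, s3, s4,
      map_sub, map_add, map_smul, smul_eq_mul, cy_fa, cy_fb, cy_bAct_fa, ht, hw,
      if_false, if_true, ite_self, mul_ite, mul_one, mul_zero, mul_sub, mul_add, mul_neg,
      neg_neg, neg_zero, sub_zero, zero_sub, sub_self,
      Finset.sum_ite_eq, Finset.mem_univ, Finset.sum_const_zero, add_zero, zero_add,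
      Finset.sum_neg_distrib] at h
    linarith [h]
  rintro (⟨j | i⟩ | i)
  exacts [hj j, ht i, hw i]


lemma tH_indep4 : LinearIndependent ℤ (tH m (fun i => s1 m (Sum.inl i) + s4 m i)) := by
  have n1 : (kg : K4) ≠ 1 := by decide
  have n2 : (kh : K4) ≠ 1 := by decide
  have n3 : (kg * kh : K4) ≠ 1 := by decide
  have n4 : (kg : K4) ≠ kh := by decide
  have n5 : (kg : K4) ≠ kg * kh := by decide
  have n6 : (kh : K4) ≠ kg * kh := by decide
  rw [Fintype.linearIndependent_iff]
  intro c hc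
  have key : ∀ (L : BB m →ₗ[ℤ] ℤ),
      ∑ k, c k * L (tH m (fun i => s1 m (Sum.inl i) + s4 m i) k) = 0 := by
    intro L
    have h := congrArg L hc
    rw [map_sum, map_zero] at h
    simpa only [map_smul, smul_eq_mul] using h
  have ht : ∀ i, c (Sum.inl (Sum.inr i)) = 0 := by
    intro i
    have h := key (cx m i kg)
    simp only [Fintype.sum_sum_type, tH, tG, Sum.elim_inl, Sum.elim_inr, s1, s2, s3, s4,
      map_sub, map_add, map_smul, smul_eq_mul, cx_fa, cx_fb, cx_bAct_fa,
      n1, n2, n3, n4, n5, n6, Ne.symm n1, Ne.symm n2, Ne.symm n3, Ne.symm n4,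
      Ne.symm n5, Ne.symm n6,
      if_false, if_true, ite_self, mul_ite, mul_one, mul_zero, mul_sub, mul_add, mul_neg,
      neg_neg, neg_zero, sub_zero, zero_sub, sub_self,
      Finset.sum_ite_eq, Finset.mem_univ, Finset.sum_const_zero, add_zero, zero_add,
      Finset.sum_neg_distrib] at h
    linarith [h]
  have hw : ∀ i, c (Sum.inr i) = 0 := by
    intro i
    have h := key (cx m i (kg * kh))
    simp only [Fintype.sum_sum_type, tH, tG, Sum.elim_inl, Sum.elim_inr, s1, s2, s3, s4,
      map_sub, map_add, map_smul, smul_eq_mul, cx_fa, cx_fb, cx_bAct_fa,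
      n1, n2, n3, n4, n5, n6, Ne.symm n1, Ne.symm n2, Ne.symm n3, Ne.symm n4,
      Ne.symm n5, Ne.symm n6, ht,
      if_false, if_true, ite_self, mul_ite, mul_one, mul_zero, mul_sub, mul_add, mul_neg,
      neg_neg, neg_zero, sub_zero, zero_sub, sub_self,
      Finset.sum_ite_eq, Finset.mem_univ, Finset.sum_const_zero, add_zero, zero_add,
      Finset.sum_neg_distrib] at h
    linarith [h]
  have hj : ∀ j, c (Sum.inl (Sum.inl j)) = 0 := by
    intro j
    have h := key (cy m j)
    simp only [Fintype.sum_sum_type, tH, tG, Sum.elim_inl, Sum.elim_inr, s1, s2, s3, s4,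
      map_sub, map_add, map_smul, smul_eq_mul, cy_fa, cy_fb, cy_bAct_fa, ht, hw,
      if_false, if_true, ite_self, mul_ite, mul_one, mul_zero, mul_sub, mul_add, mul_neg,
      neg_neg, neg_zero, sub_zero, zero_sub, sub_self,
      Finset.sum_ite_eq, Finset.mem_univ, Finset.sum_const_zero, add_zero, zero_add,
      Finset.sum_neg_distrib] at h
    linarith [h]
  rintro (⟨j | i⟩ | i)
  exacts [hj j, ht i, hw i]



lemma tG_indep : LinearIndependent ℤ (tG m) := by
  have h := (tH_indep2 (m := m)).comp Sum.inl Sum.inl_injective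
  rwa [show tH m (fun i => s1 m (Sum.inl i) + s2 m i) ∘ Sum.inl = tG m from rfl] at h

end helpers

/-- With `G` the Klein four group, `M = Ω^{-m}F₂`, `B = (ℤ[G])^{⊕m} ⊕ ℤ^{⊕(m+1)}`,
`φ : B → M` as specified and `A = ker φ`: the `5m+1` elements `s_j` form a ℤ-basis of
`A ≅ ℤ^{5m+1}`; the elements `s_{m+1}, …, s_{2m+1}` together with
`2s_i + s_{2m+1+i} + s_{3m+1+i} + s_{4m+1+i}` (`1 ≤ i ≤ m`) form a ℤ-basis of `A^G`
(which therefore has rank `2m+1`); and adjoining the elements `s_i + s_{2m+1+i}`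
(resp. `s_i + s_{3m+1+i}`, resp. `s_i + s_{4m+1+i}`) for `1 ≤ i ≤ m` yields a ℤ-basis
of `A^{H₁}` (resp. `A^{H₂}`, resp. `A^{H₃}`), each of rank `3m+1`. -/
theorem stmt_8 (m : ℕ) (hm : 1 ≤ m)
    (ρ : Representation (ZMod 2) K4 (MM m))
    (hga : ∀ j : Fin (m + 1), ρ kg (ea m j) = ea m j)
    (hha : ∀ j : Fin (m + 1), ρ kh (ea m j) = ea m j)
    (hgb : ∀ j : Fin m, ρ kg (eb m j) = ea m j.castSucc + eb m j)
    (hhb : ∀ j : Fin m, ρ kh (eb m j) = ea m j.succ + eb m j)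
    (φ : BB m →+ MM m)
    (hequiv : ∀ (γ : K4) (b : BB m), φ (bAct m γ b) = ρ γ (φ b))
    (hfa : ∀ i : Fin m, φ (fa m i) = eb m i)
    (hfb : ∀ j : Fin (m + 1), φ (fb m j) = ea m j) :
    (LinearIndependent ℤ (sAll m) ∧
      Submodule.span ℤ (Set.range (sAll m)) = LinearMap.ker φ.toIntLinearMap) ∧
    (LinearIndependent ℤ (tG m) ∧
      (↑(Submodule.span ℤ (Set.range (tG m))) : Set (BB m))
        = {b : BB m | φ b = 0 ∧ ∀ γ : K4, bAct m γ b = b}) ∧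
    (LinearIndependent ℤ (tH m (fun i => s1 m (Sum.inl i) + s2 m i)) ∧
      (↑(Submodule.span ℤ (Set.range (tH m (fun i => s1 m (Sum.inl i) + s2 m i)))) : Set (BB m))
        = {b : BB m | φ b = 0 ∧ ∀ γ ∈ Subgroup.zpowers kg, bAct m γ b = b}) ∧
    (LinearIndependent ℤ (tH m (fun i => s1 m (Sum.inl i) + s3 m i)) ∧
      (↑(Submodule.span ℤ (Set.range (tH m (fun i => s1 m (Sum.inl i) + s3 m i)))) : Set (BB m))
        = {b : BB m | φ b = 0 ∧ ∀ γ ∈ Subgroup.zpowers kh, bAct m γ b = b}) ∧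
    (LinearIndependent ℤ (tH m (fun i => s1 m (Sum.inl i) + s4 m i)) ∧
      (↑(Submodule.span ℤ (Set.range (tH m (fun i => s1 m (Sum.inl i) + s4 m i)))) : Set (BB m))
        = {b : BB m | φ b = 0 ∧ ∀ γ ∈ Subgroup.zpowers (kg * kh), bAct m γ b = b}) := by
  have n_gg : kg * kg = (1:K4) := by decide
  have n_hh : kh * kh = (1:K4) := by decide
  have n_hg : kh * kg = (kg * kh : K4) := by decide
  have n_ghg : (kg * kh) * kg = (kh : K4) := by decide
  have n_ghgh : (kg * kh) * (kg * kh) = (1:K4) := by decide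
  have ps1 : ∀ k, φ (s1 m k) = 0 := phi_s1 ρ φ hequiv hfa hfb
  have ps2 : ∀ i, φ (s2 m i) = 0 := phi_s2 ρ hgb φ hequiv hfa hfb
  have ps3 : ∀ i, φ (s3 m i) = 0 := phi_s3 ρ hhb φ hequiv hfa hfb
  have ps4 : ∀ i, φ (s4 m i) = 0 := phi_s4 ρ hga hgb hhb φ hequiv hfa hfb
  have ptG : ∀ k, φ (tG m k) = 0 := by
    rintro (j | i)
    · exact ps1 (Sum.inr j)
    · show φ ((2:ℤ) • s1 m (Sum.inl i) + s2 m i + s3 m i + s4 m i) = 0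
      rw [map_add, map_add, map_add, map_zsmul, ps1, ps2, ps3, ps4]
      simp
  have hdvd : ∀ b : BB m, φ b = 0 → (∀ i, 2 ∣ Uc b i) ∧ (∀ j, 2 ∣ Vc b j) := by
    intro b hb0
    apply mm_coords
    have h1 := phi_combo ρ hga hgb hhb φ hequiv hfa hfb (fun i => (b.1 i).coeff kg)
      (fun i => (b.1 i).coeff kh) (fun i => (b.1 i).coeff (kg * kh)) (Uc b) (Vc b)
    rw [← master b, hb0] at h1
    exact h1.symm
  -- Part 1 : span sAll = ker φ
  have hker : Submodule.span ℤ (Set.range (sAll m)) = LinearMap.ker φ.toIntLinearMap := by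
    apply le_antisymm
    · rw [Submodule.span_le]
      rintro x ⟨k, rfl⟩
      rw [SetLike.mem_coe, LinearMap.mem_ker]
      show φ (sAll m k) = 0
      rcases k with (k | (i | i | i))
      exacts [ps1 k, ps2 i, ps3 i, ps4 i]
    · intro b hb
      have hb0 : φ b = 0 := hb
      obtain ⟨hU, hV⟩ := hdvd b hb0
      rw [master b]
      unfold combo
      refine Submodule.add_mem _ (Submodule.add_mem _ (Submodule.add_mem _
        (Submodule.add_mem _ ?_ ?_) ?_) ?_) ?_
      · exact Submodule.sum_mem _ fun i _ => Submodule.smul_mem _ _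
          (Submodule.subset_span ⟨Sum.inr (Sum.inl i), rfl⟩)
      · exact Submodule.sum_mem _ fun i _ => Submodule.smul_mem _ _
          (Submodule.subset_span ⟨Sum.inr (Sum.inr (Sum.inl i)), rfl⟩)
      · exact Submodule.sum_mem _ fun i _ => Submodule.smul_mem _ _
          (Submodule.subset_span ⟨Sum.inr (Sum.inr (Sum.inr i)), rfl⟩)
      · refine Submodule.sum_mem _ fun i _ => ?_
        obtain ⟨u, hu⟩ := hU i
        rw [hu, mul_comm, ← smul_smul]
        exact Submodule.smul_mem _ _ (Submodule.subset_span ⟨Sum.inl (Sum.inl i), rfl⟩)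
      · refine Submodule.sum_mem _ fun j _ => ?_
        obtain ⟨v, hv⟩ := hV j
        rw [hv, mul_comm, ← smul_smul]
        exact Submodule.smul_mem _ _ (Submodule.subset_span ⟨Sum.inl (Sum.inr j), rfl⟩)
  -- Part 2 : span tG = A^G
  have hGset : (↑(Submodule.span ℤ (Set.range (tG m))) : Set (BB m))
      = {b : BB m | φ b = 0 ∧ ∀ γ : K4, bAct m γ b = b} := by
    ext b
    simp only [SetLike.mem_coe, Set.mem_setOf_eq]
    constructor
    · intro hb
      refine Submodule.span_induction (p := fun b _ => φ b = 0 ∧ ∀ γ : K4, bAct m γ b = b)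
        ?_ ?_ ?_ ?_ hb
      · rintro x ⟨k, rfl⟩
        exact ⟨ptG k, fun γ => tG_fixed γ k⟩
      · exact ⟨map_zero φ, fun γ => bAct_zero γ⟩
      · rintro x y _ _ ⟨hx0, hxf⟩ ⟨hy0, hyf⟩
        exact ⟨by rw [map_add, hx0, hy0, add_zero],
          fun γ => by rw [bAct_add, hxf γ, hyf γ]⟩
      · rintro a x _ ⟨hx0, hxf⟩
        exact ⟨by rw [map_zsmul, hx0, smul_zero], fun γ => by rw [bAct_smul, hxf γ]⟩
    · rintro ⟨hb0, hfix⟩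
      have e1 := fix_coeff (hfix kg)
      have e2 := fix_coeff (hfix kh)
      have hV := (hdvd b hb0).2
      have hx1 : ∀ i, (b.1 i).coeff 1 = (b.1 i).coeff kg := by
        intro i; have := e1 i kg; rwa [n_gg] at this
      have hxgh : ∀ i, (b.1 i).coeff (kg * kh) = (b.1 i).coeff kg := by
        intro i; have := e2 i kg; rwa [n_hg] at this
      have hxh : ∀ i, (b.1 i).coeff kh = (b.1 i).coeff kg := by
        intro i; rw [← e1 i kh, hxgh i]
      have hB : (fun i => (b.1 i).coeff kh) = (fun i => (b.1 i).coeff kg) := funext hxh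
      have hC : (fun i => (b.1 i).coeff (kg * kh)) = (fun i => (b.1 i).coeff kg) := funext hxgh
      have hU : Uc b = fun i => (b.1 i).coeff kg + (b.1 i).coeff kg + (b.1 i).coeff kg + (b.1 i).coeff kg := by
        funext i; unfold Uc; rw [hx1 i, hxh i, hxgh i]
      have hV' : Vc b = fun j => 2 * (Vc b j / 2) := by
        funext j; exact (Int.mul_ediv_cancel' (hV j)).symm
      have hb_eq : b = (∑ i, ((b.1 i).coeff kg) • tG m (Sum.inr i))
          + ∑ j, (Vc b j / 2) • tG m (Sum.inl j) := by
        conv_lhs => rw [master b, hB, hC, hU, hV']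
        exact comboG _ _
      rw [hb_eq]
      exact Submodule.add_mem _
        (Submodule.sum_mem _ fun i _ => Submodule.smul_mem _ _
          (Submodule.subset_span ⟨Sum.inr i, rfl⟩))
        (Submodule.sum_mem _ fun j _ => Submodule.smul_mem _ _
          (Submodule.subset_span ⟨Sum.inl j, rfl⟩))
  have hH1 : (↑(Submodule.span ℤ (Set.range (tH m (fun i => s1 m (Sum.inl i) + s2 m i)))) : Set (BB m))
      = {b : BB m | φ b = 0 ∧ ∀ γ ∈ Subgroup.zpowers kg, bAct m γ b = b} := by
    ext b
    simp only [SetLike.mem_coe, Set.mem_setOf_eq]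
    constructor
    · intro hb
      have key : φ b = 0 ∧ bAct m kg b = b := by
        refine Submodule.span_induction (p := fun b _ => φ b = 0 ∧ bAct m kg b = b) ?_ ?_ ?_ ?_ hb
        · rintro x ⟨k, rfl⟩
          rcases k with (k | i)
          · exact ⟨ptG k, tG_fixed kg k⟩
          · refine ⟨?_, w2_fixed i⟩
            show φ (s1 m (Sum.inl i) + s2 m i) = 0
            rw [map_add, ps1, ps2, add_zero]
        · exact ⟨map_zero φ, bAct_zero kg⟩
        · rintro x y _ _ ⟨hx0, hxf⟩ ⟨hy0, hyf⟩
          exact ⟨by rw [map_add, hx0, hy0, add_zero], by rw [bAct_add, hxf, hyf]⟩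
        · rintro a x _ ⟨hx0, hxf⟩
          exact ⟨by rw [map_zsmul, hx0, smul_zero], by rw [bAct_smul, hxf]⟩
      refine ⟨key.1, fun γ hγ => ?_⟩
      have hst : Subgroup.zpowers kg ≤ stab m b :=
        Subgroup.zpowers_le.mpr (show kg ∈ stab m b from key.2)
      exact hst hγ
    · rintro ⟨hb0, hfix⟩
      have hg : bAct m kg b = b := hfix kg (Subgroup.mem_zpowers kg)
      have e1 := fix_coeff hg
      have hV := (hdvd b hb0).2
      have hx1 : ∀ i, (b.1 i).coeff 1 = (b.1 i).coeff kg := fun i => by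
        have := e1 i kg; rwa [n_gg] at this
      have hC : (fun i => (b.1 i).coeff (kg * kh)) = (fun i => (b.1 i).coeff kh) :=
        funext fun i => e1 i kh
      have hU : Uc b = fun i => (b.1 i).coeff kg + (b.1 i).coeff kg + (b.1 i).coeff kh + (b.1 i).coeff kh := by
        funext i; unfold Uc; rw [hx1 i, e1 i kh]
      have hV' : Vc b = fun j => 2 * (Vc b j / 2) := by
        funext j; exact (Int.mul_ediv_cancel' (hV j)).symm
      have hb_eq : b = (∑ i, (((b.1 i).coeff kh) • tG m (Sum.inr i)
            + ((b.1 i).coeff kg - (b.1 i).coeff kh) • (s1 m (Sum.inl i) + s2 m i)))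
          + ∑ j, (Vc b j / 2) • tG m (Sum.inl j) := by
        conv_lhs => rw [master b, hC, hU, hV']
        exact comboH1 _ _ _
      rw [hb_eq]
      refine Submodule.add_mem _ (Submodule.sum_mem _ fun i _ => Submodule.add_mem _
        (Submodule.smul_mem _ _ (Submodule.subset_span ⟨Sum.inl (Sum.inr i), rfl⟩))
        (Submodule.smul_mem _ _ (Submodule.subset_span ⟨Sum.inr i, rfl⟩)))
        (Submodule.sum_mem _ fun j _ => Submodule.smul_mem _ _
          (Submodule.subset_span ⟨Sum.inl (Sum.inl j), rfl⟩))
  have hH2 : (↑(Submodule.span ℤ (Set.range (tH m (fun i => s1 m (Sum.inl i) + s3 m i)))) : Set (BB m))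
      = {b : BB m | φ b = 0 ∧ ∀ γ ∈ Subgroup.zpowers kh, bAct m γ b = b} := by
    ext b
    simp only [SetLike.mem_coe, Set.mem_setOf_eq]
    constructor
    · intro hb
      have key : φ b = 0 ∧ bAct m kh b = b := by
        refine Submodule.span_induction (p := fun b _ => φ b = 0 ∧ bAct m kh b = b) ?_ ?_ ?_ ?_ hb
        · rintro x ⟨k, rfl⟩
          rcases k with (k | i)
          · exact ⟨ptG k, tG_fixed kh k⟩
          · refine ⟨?_, w3_fixed i⟩
            show φ (s1 m (Sum.inl i) + s3 m i) = 0
            rw [map_add, ps1, ps3, add_zero]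
        · exact ⟨map_zero φ, bAct_zero kh⟩
        · rintro x y _ _ ⟨hx0, hxf⟩ ⟨hy0, hyf⟩
          exact ⟨by rw [map_add, hx0, hy0, add_zero], by rw [bAct_add, hxf, hyf]⟩
        · rintro a x _ ⟨hx0, hxf⟩
          exact ⟨by rw [map_zsmul, hx0, smul_zero], by rw [bAct_smul, hxf]⟩
      refine ⟨key.1, fun γ hγ => ?_⟩
      have hst : Subgroup.zpowers kh ≤ stab m b :=
        Subgroup.zpowers_le.mpr (show kh ∈ stab m b from key.2)
      exact hst hγ
    · rintro ⟨hb0, hfix⟩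
      have hg : bAct m kh b = b := hfix kh (Subgroup.mem_zpowers kh)
      have e1 := fix_coeff hg
      have hV := (hdvd b hb0).2
      have hx1 : ∀ i, (b.1 i).coeff 1 = (b.1 i).coeff kh := fun i => by
        have := e1 i kh; rwa [n_hh] at this
      have hxgh : ∀ i, (b.1 i).coeff (kg * kh) = (b.1 i).coeff kg := fun i => by
        have := e1 i kg; rwa [n_hg] at this
      have hC : (fun i => (b.1 i).coeff (kg * kh)) = (fun i => (b.1 i).coeff kg) := funext hxgh
      have hU : Uc b = fun i => (b.1 i).coeff kh + (b.1 i).coeff kg + (b.1 i).coeff kh + (b.1 i).coeff kg := by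
        funext i; unfold Uc; rw [hx1 i, hxgh i]
      have hV' : Vc b = fun j => 2 * (Vc b j / 2) := by
        funext j; exact (Int.mul_ediv_cancel' (hV j)).symm
      have hb_eq : b = (∑ i, (((b.1 i).coeff kg) • tG m (Sum.inr i)
            + ((b.1 i).coeff kh - (b.1 i).coeff kg) • (s1 m (Sum.inl i) + s3 m i)))
          + ∑ j, (Vc b j / 2) • tG m (Sum.inl j) := by
        conv_lhs => rw [master b, hC, hU, hV']
        exact comboH2 _ _ _
      rw [hb_eq]
      refine Submodule.add_mem _ (Submodule.sum_mem _ fun i _ => Submodule.add_mem _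
        (Submodule.smul_mem _ _ (Submodule.subset_span ⟨Sum.inl (Sum.inr i), rfl⟩))
        (Submodule.smul_mem _ _ (Submodule.subset_span ⟨Sum.inr i, rfl⟩)))
        (Submodule.sum_mem _ fun j _ => Submodule.smul_mem _ _
          (Submodule.subset_span ⟨Sum.inl (Sum.inl j), rfl⟩))
  have hH3 : (↑(Submodule.span ℤ (Set.range (tH m (fun i => s1 m (Sum.inl i) + s4 m i)))) : Set (BB m))
      = {b : BB m | φ b = 0 ∧ ∀ γ ∈ Subgroup.zpowers (kg * kh), bAct m γ b = b} := by
    ext b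
    simp only [SetLike.mem_coe, Set.mem_setOf_eq]
    constructor
    · intro hb
      have key : φ b = 0 ∧ bAct m (kg * kh) b = b := by
        refine Submodule.span_induction
          (p := fun b _ => φ b = 0 ∧ bAct m (kg * kh) b = b) ?_ ?_ ?_ ?_ hb
        · rintro x ⟨k, rfl⟩
          rcases k with (k | i)
          · exact ⟨ptG k, tG_fixed (kg * kh) k⟩
          · refine ⟨?_, w4_fixed i⟩
            show φ (s1 m (Sum.inl i) + s4 m i) = 0
            rw [map_add, ps1, ps4, add_zero]
        · exact ⟨map_zero φ, bAct_zero (kg * kh)⟩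
        · rintro x y _ _ ⟨hx0, hxf⟩ ⟨hy0, hyf⟩
          exact ⟨by rw [map_add, hx0, hy0, add_zero], by rw [bAct_add, hxf, hyf]⟩
        · rintro a x _ ⟨hx0, hxf⟩
          exact ⟨by rw [map_zsmul, hx0, smul_zero], by rw [bAct_smul, hxf]⟩
      refine ⟨key.1, fun γ hγ => ?_⟩
      have hst : Subgroup.zpowers (kg * kh) ≤ stab m b :=
        Subgroup.zpowers_le.mpr (show kg * kh ∈ stab m b from key.2)
      exact hst hγ
    · rintro ⟨hb0, hfix⟩
      have hg : bAct m (kg * kh) b = b := hfix (kg * kh) (Subgroup.mem_zpowers (kg * kh))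
      have e1 := fix_coeff hg
      have hV := (hdvd b hb0).2
      have hx1 : ∀ i, (b.1 i).coeff 1 = (b.1 i).coeff (kg * kh) := fun i => by
        have := e1 i (kg * kh); rwa [n_ghgh] at this
      have hxh : ∀ i, (b.1 i).coeff kh = (b.1 i).coeff kg := fun i => by
        have := e1 i kg; rwa [n_ghg] at this
      have hB : (fun i => (b.1 i).coeff kh) = (fun i => (b.1 i).coeff kg) := funext hxh
      have hU : Uc b = fun i => (b.1 i).coeff (kg * kh) + (b.1 i).coeff kg + (b.1 i).coeff kg + (b.1 i).coeff (kg * kh) := by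
        funext i; unfold Uc; rw [hx1 i, hxh i]
      have hV' : Vc b = fun j => 2 * (Vc b j / 2) := by
        funext j; exact (Int.mul_ediv_cancel' (hV j)).symm
      have hb_eq : b = (∑ i, (((b.1 i).coeff kg) • tG m (Sum.inr i)
            + ((b.1 i).coeff (kg * kh) - (b.1 i).coeff kg) • (s1 m (Sum.inl i) + s4 m i)))
          + ∑ j, (Vc b j / 2) • tG m (Sum.inl j) := by
        conv_lhs => rw [master b, hB, hU, hV']
        exact comboH3 _ _ _
      rw [hb_eq]
      refine Submodule.add_mem _ (Submodule.sum_mem _ fun i _ => Submodule.add_mem _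
        (Submodule.smul_mem _ _ (Submodule.subset_span ⟨Sum.inl (Sum.inr i), rfl⟩))
        (Submodule.smul_mem _ _ (Submodule.subset_span ⟨Sum.inr i, rfl⟩)))
        (Submodule.sum_mem _ fun j _ => Submodule.smul_mem _ _
          (Submodule.subset_span ⟨Sum.inl (Sum.inl j), rfl⟩))
  exact ⟨⟨sAll_indep, hker⟩, ⟨tG_indep, hGset⟩, ⟨tH_indep2, hH1⟩, ⟨tH_indep3, hH2⟩,
    ⟨tH_indep4, hH3⟩⟩
end

section
/- Let F be a field and n ≥ 1 an integer. Let R = F[u, w] and let N be the R-module with generators e₀, …, e_{n−1} and relations u·e_{i+2} = w·e_i for 0 ≤ i ≤ n−3, w·e_{n−2} = 0, and w·e_{n−1} = 0. Make the quotient ring F[x, z]/(z^n) an R-module via u ↦ x² and w ↦ z². Then the R-module homomorphism N → F[x, z]/(z^n) sending e_i ↦ x^{n−1−i} z^i (0 ≤ i ≤ n−1) is injective, and its image is the F-linear span of the classes of the monomials x^a z^b with 0 ≤ b ≤ n−1, a + b ≥ n−1, and a + b ≡ n−1 (mod 2). -/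
set_option synthInstance.maxHeartbeats 1000000
set_option maxHeartbeats 1000000


/-- The polynomial ring `R = F[u, w]`, with `u = X 0` and `w = X 1`
(also used as `F[x, z]`, with `x = X 0` and `z = X 1`). -/
abbrev RR (F : Type*) [Field F] : Type _ := MvPolynomial (Fin 2) F

/-- The quotient ring `S = F[x, z]/(z^n)`. -/
abbrev SS (F : Type*) [Field F] (n : ℕ) : Type _ :=
  RR F ⧸ Ideal.span {(MvPolynomial.X 1 : RR F) ^ n}

/-- The relations `u·e_{i+2} − w·e_i` (for `0 ≤ i ≤ n−3`), `w·e_{n−2}` and `w·e_{n−1}`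
in the free `R`-module on `e₀, …, e_{n−1}`. -/
def relSet (F : Type*) [Field F] (n : ℕ) (hn : 1 ≤ n) : Set (Fin n →₀ RR F) :=
  {z | (∃ (i : ℕ) (h : i + 3 ≤ n),
      z = (MvPolynomial.X 0 : RR F) • Finsupp.single (⟨i + 2, by omega⟩ : Fin n) (1 : RR F)
        - (MvPolynomial.X 1 : RR F) • Finsupp.single (⟨i, by omega⟩ : Fin n) (1 : RR F)) ∨
    z = (MvPolynomial.X 1 : RR F) • Finsupp.single (⟨n - 2, by omega⟩ : Fin n) (1 : RR F) ∨
    z = (MvPolynomial.X 1 : RR F) • Finsupp.single (⟨n - 1, by omega⟩ : Fin n) (1 : RR F)}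

/-- The `R`-module `N` with generators `e₀, …, e_{n−1}` and relations
`u·e_{i+2} = w·e_i` (`0 ≤ i ≤ n−3`), `w·e_{n−2} = 0`, `w·e_{n−1} = 0`. -/
abbrev NN (F : Type*) [Field F] (n : ℕ) (hn : 1 ≤ n) : Type _ :=
  (Fin n →₀ RR F) ⧸ Submodule.span (RR F) (relSet F n hn)

/-- The generator `e_i` of `N`. -/
noncomputable def en (F : Type*) [Field F] (n : ℕ) (hn : 1 ≤ n) (i : Fin n) : NN F n hn :=
  Submodule.Quotient.mk (Finsupp.single i 1)

/-- The ring homomorphism `R = F[u, w] → S = F[x, z]/(z^n)` sending `u ↦ x²`, `w ↦ z²`. -/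
noncomputable def θ (F : Type*) [Field F] (n : ℕ) : RR F →+* SS F n :=
  (Ideal.Quotient.mk (Ideal.span {(MvPolynomial.X 1 : RR F) ^ n})).comp
    (MvPolynomial.aeval (fun j : Fin 2 => (MvPolynomial.X j : RR F) ^ 2)).toRingHom

section Aux

open MvPolynomial

variable (F : Type*) [Field F] (n : ℕ) (hn : 1 ≤ n)

/-- Abbreviation for the quotient map `R → S`. -/
noncomputable abbrev mkS : RR F →+* SS F n :=
  Ideal.Quotient.mk (Ideal.span {(MvPolynomial.X 1 : RR F) ^ n})

lemma theta_apply (r : RR F) :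
    θ F n r = mkS F n (MvPolynomial.aeval (fun j : Fin 2 => (MvPolynomial.X j : RR F) ^ 2) r) :=
  rfl

lemma smul_mkS (c : F) (p : RR F) : c • mkS F n p = mkS F n (MvPolynomial.C c * p) := by
  have : c • (mkS F n) p = mkS F n (c • p) := (Submodule.Quotient.mk_smul _ c p).symm
  rw [this, smul_eq_C_mul]

lemma smul_en (r : RR F) (i : Fin n) :
    r • en F n hn i = Submodule.Quotient.mk (Finsupp.single i r) := by
  rw [en, ← Submodule.Quotient.mk_smul, Finsupp.smul_single', mul_one]

/-- Key relation: `w • e_i = u • e_{i+2}` when `i + 3 ≤ n`. -/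
lemma rel_a (i : ℕ) (h : i + 3 ≤ n) :
    (MvPolynomial.X 1 : RR F) • en F n hn ⟨i, by omega⟩
      = (MvPolynomial.X 0 : RR F) • en F n hn ⟨i + 2, by omega⟩ := by
  rw [eq_comm, ← sub_eq_zero, en, en, ← Submodule.Quotient.mk_smul, ← Submodule.Quotient.mk_smul,
    ← Submodule.Quotient.mk_sub, Submodule.Quotient.mk_eq_zero]
  exact Submodule.subset_span (Or.inl ⟨i, h, rfl⟩)

lemma rel_b : (MvPolynomial.X 1 : RR F) • en F n hn ⟨n - 2, by omega⟩ = 0 := by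
  rw [en, ← Submodule.Quotient.mk_smul, Submodule.Quotient.mk_eq_zero]
  exact Submodule.subset_span (Or.inr (Or.inl rfl))

lemma rel_c : (MvPolynomial.X 1 : RR F) • en F n hn ⟨n - 1, by omega⟩ = 0 := by
  rw [en, ← Submodule.Quotient.mk_smul, Submodule.Quotient.mk_eq_zero]
  exact Submodule.subset_span (Or.inr (Or.inr rfl))

/-- The family `u^j • e_i` spanning `N` over `F`. -/
noncomputable def vv (p : ℕ × Fin n) : NN F n hn :=
  ((MvPolynomial.X 0 : RR F) ^ p.1) • en F n hn p.2

lemma X_smul_mem (k : Fin 2) (m : NN F n hn)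
    (hm : m ∈ Submodule.span F (Set.range (vv F n hn))) :
    (MvPolynomial.X k : RR F) • m ∈ Submodule.span F (Set.range (vv F n hn)) := by
  induction hm using Submodule.span_induction with
  | mem x hx =>
    obtain ⟨⟨j, i⟩, rfl⟩ := hx
    fin_cases k
    · -- X 0
      show (MvPolynomial.X 0 : RR F) • vv F n hn (j, i) ∈ _
      have : (MvPolynomial.X 0 : RR F) • vv F n hn (j, i) = vv F n hn (j + 1, i) := by
        rw [vv, vv, smul_smul, ← pow_succ']
      rw [this]
      exact Submodule.subset_span ⟨(j + 1, i), rfl⟩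
    · -- X 1
      show (MvPolynomial.X 1 : RR F) • vv F n hn (j, i) ∈ _
      have hcomm : (MvPolynomial.X 1 : RR F) • vv F n hn (j, i)
          = ((MvPolynomial.X 0 : RR F) ^ j) • ((MvPolynomial.X 1 : RR F) • en F n hn i) := by
        rw [vv, smul_smul, smul_smul, mul_comm]
      rcases lt_or_ge (i.val + 2) n with h | h
      · have hi : i = ⟨i.val, by omega⟩ := rfl
        rw [hcomm, hi, rel_a F n hn i.val (by omega), smul_smul, ← pow_succ]
        exact Submodule.subset_span ⟨(j + 1, ⟨i.val + 2, by omega⟩), rfl⟩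
      · rcases Nat.lt_or_ge i.val (n - 1) with h2 | h2
        · have hi : i = (⟨n - 2, by omega⟩ : Fin n) := Fin.ext (show i.val = n - 2 by omega)
          rw [hcomm, hi, rel_b F n hn, smul_zero]
          exact Submodule.zero_mem _
        · have hi : i = (⟨n - 1, by omega⟩ : Fin n) := Fin.ext (show i.val = n - 1 by omega)
          rw [hcomm, hi, rel_c F n hn, smul_zero]
          exact Submodule.zero_mem _
  | zero => rw [smul_zero]; exact Submodule.zero_mem _
  | add x y _ _ hx hy => rw [smul_add]; exact Submodule.add_mem _ hx hy
  | smul c x _ hx => rw [smul_comm]; exact Submodule.smul_mem _ c hx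

lemma smul_mem_span (r : RR F) (m : NN F n hn)
    (hm : m ∈ Submodule.span F (Set.range (vv F n hn))) :
    r • m ∈ Submodule.span F (Set.range (vv F n hn)) := by
  induction r using MvPolynomial.induction_on with
  | C a =>
    have : (MvPolynomial.C a : RR F) • m = a • m := by
      rw [show (MvPolynomial.C a : RR F) = algebraMap F (RR F) a from rfl, algebraMap_smul]
    rw [this]
    exact Submodule.smul_mem _ a hm
  | add p q hp hq => rw [add_smul]; exact Submodule.add_mem _ hp hq
  | mul_X p k hp =>
    rw [mul_comm, mul_smul]
    exact X_smul_mem F n hn k _ (hp)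

lemma span_vv_top : Submodule.span F (Set.range (vv F n hn)) = ⊤ := by
  rw [Submodule.eq_top_iff']
  intro m
  obtain ⟨g, rfl⟩ := Submodule.Quotient.mk_surjective _ m
  induction g using Finsupp.induction with
  | zero =>
    rw [Submodule.Quotient.mk_zero]
    exact Submodule.zero_mem _
  | single_add a r g _ _ ih =>
    rw [Submodule.Quotient.mk_add]
    refine Submodule.add_mem _ ?_ ih
    have : (Submodule.Quotient.mk (Finsupp.single a r) : NN F n hn) = r • en F n hn a :=
      (smul_en F n hn r a).symm
    rw [this]
    refine smul_mem_span F n hn r _ ?_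
    have : en F n hn a = vv F n hn (0, a) := by rw [vv, pow_zero, one_smul]
    rw [this]
    exact Submodule.subset_span ⟨(0, a), rfl⟩

/-- Exponent of the monomial `x^{2j+(n-1-i)} z^i`. -/
noncomputable def ee (p : ℕ × Fin n) : Fin 2 →₀ ℕ :=
  Finsupp.single 0 (2 * p.1 + (n - 1 - p.2.val)) + Finsupp.single 1 p.2.val

lemma ee_apply_zero (p : ℕ × Fin n) : ee n p 0 = 2 * p.1 + (n - 1 - p.2.val) := by
  simp [ee, Finsupp.single_apply]

lemma ee_apply_one (p : ℕ × Fin n) : ee n p 1 = p.2.val := by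
  simp [ee, Finsupp.single_apply]

lemma ee_inj : Function.Injective (ee n) := by
  rintro ⟨j, i⟩ ⟨j', i'⟩ h
  have h0 := DFunLike.congr_fun h (0 : Fin 2)
  have h1 := DFunLike.congr_fun h (1 : Fin 2)
  simp only [ee_apply_zero, ee_apply_one] at h0 h1
  have hi : i = i' := Fin.ext h1
  subst hi
  exact Prod.ext (by omega) rfl

lemma mono_eq (a b : ℕ) :
    (MvPolynomial.X 0 : RR F) ^ a * MvPolynomial.X 1 ^ b
      = MvPolynomial.monomial (Finsupp.single 0 a + Finsupp.single 1 b) (1 : F) := by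
  rw [X_pow_eq_monomial, X_pow_eq_monomial, monomial_mul, mul_one]

lemma indep (c : (ℕ × Fin n) →₀ F)
    (h : (c.sum fun p a =>
        a • ((MvPolynomial.X 0 : RR F) ^ (2 * p.1 + (n - 1 - p.2.val))
          * MvPolynomial.X 1 ^ p.2.val))
      ∈ Ideal.span {(MvPolynomial.X 1 : RR F) ^ n}) : c = 0 := by
  rw [Ideal.mem_span_singleton] at h
  obtain ⟨q, hq⟩ := h
  ext p
  have hco : MvPolynomial.coeff (ee n p) (c.sum fun p a =>
      a • ((MvPolynomial.X 0 : RR F) ^ (2 * p.1 + (n - 1 - p.2.val))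
        * MvPolynomial.X 1 ^ p.2.val)) = c p := by
    rw [Finsupp.sum, coeff_sum]
    have hterm : ∀ p' ∈ c.support,
        MvPolynomial.coeff (ee n p)
          (c p' • ((MvPolynomial.X 0 : RR F) ^ (2 * p'.1 + (n - 1 - p'.2.val))
            * MvPolynomial.X 1 ^ p'.2.val))
        = if p' = p then c p' else 0 := by
      intro p' _
      rw [mono_eq, coeff_smul, ← ee, coeff_monomial]
      by_cases hpe : p' = p
      · simp [hpe]
      · have : ee n p' ≠ ee n p := fun hc => hpe (ee_inj n hc)
        simp [hpe, this]
    rw [Finset.sum_congr rfl hterm, Finset.sum_ite_eq' c.support p (fun p' => c p')]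
    by_cases hp : p ∈ c.support
    · simp [hp]
    · simp [hp, Finsupp.notMem_support_iff.mp hp]
  have hzero : MvPolynomial.coeff (ee n p) ((MvPolynomial.X 1 : RR F) ^ n * q) = 0 := by
    rw [X_pow_eq_monomial, coeff_monomial_mul', if_neg]
    intro hle
    have h1 := Finsupp.le_def.mp hle 1
    rw [ee_apply_one, Finsupp.single_eq_same] at h1
    have h2 := p.2.isLt
    omega
  rw [hq, hzero] at hco
  simp [hco.symm]

lemma f_smul_en (f : NN F n hn →ₛₗ[θ F n] SS F n)
    (hf : ∀ i : Fin n, f (en F n hn i)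
      = Ideal.Quotient.mk (Ideal.span {(MvPolynomial.X 1 : RR F) ^ n})
          (MvPolynomial.X 0 ^ (n - 1 - i.val) * MvPolynomial.X 1 ^ i.val))
    (j k : ℕ) (i : Fin n) :
    f (((MvPolynomial.X 0 : RR F) ^ j * MvPolynomial.X 1 ^ k) • en F n hn i)
      = mkS F n (MvPolynomial.X 0 ^ (2 * j + (n - 1 - i.val))
          * MvPolynomial.X 1 ^ (2 * k + i.val)) := by
  rw [LinearMap.map_smulₛₗ, hf, theta_apply, smul_eq_mul, ← map_mul]
  congr 1
  rw [map_mul, map_pow, map_pow, aeval_X, aeval_X]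
  ring

lemma f_vv (f : NN F n hn →ₛₗ[θ F n] SS F n)
    (hf : ∀ i : Fin n, f (en F n hn i)
      = Ideal.Quotient.mk (Ideal.span {(MvPolynomial.X 1 : RR F) ^ n})
          (MvPolynomial.X 0 ^ (n - 1 - i.val) * MvPolynomial.X 1 ^ i.val))
    (p : ℕ × Fin n) :
    f (vv F n hn p)
      = mkS F n (MvPolynomial.X 0 ^ (2 * p.1 + (n - 1 - p.2.val))
          * MvPolynomial.X 1 ^ p.2.val) := by
  have h := f_smul_en F n hn f hf p.1 0 p.2
  rw [pow_zero, mul_one] at h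
  rw [vv, h]
  norm_num

lemma f_smul_F (f : NN F n hn →ₛₗ[θ F n] SS F n) (c : F) (m : NN F n hn) :
    f (c • m) = c • f m := by
  have h1 : c • m = (MvPolynomial.C c : RR F) • m := by
    rw [show (MvPolynomial.C c : RR F) = algebraMap F (RR F) c from rfl, algebraMap_smul]
  rw [h1, LinearMap.map_smulₛₗ]
  have h2 : θ F n (MvPolynomial.C c) = mkS F n (MvPolynomial.C c) := by
    rw [theta_apply, aeval_C]
    rfl
  obtain ⟨p, hp⟩ := Ideal.Quotient.mk_surjective
    (I := Ideal.span {(MvPolynomial.X 1 : RR F) ^ n}) (f m)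
  rw [← hp, smul_eq_mul, h2, ← map_mul, smul_mkS]

end Aux

set_option synthInstance.maxHeartbeats 1000000 in
set_option maxHeartbeats 1000000 in
/-- Let `F` be a field, `n ≥ 1`, `R = F[u, w]`, and `N` the `R`-module with generators
`e₀, …, e_{n−1}` and relations `u·e_{i+2} = w·e_i` (`0 ≤ i ≤ n−3`), `w·e_{n−2} = 0`,
`w·e_{n−1} = 0`.  Make `F[x, z]/(z^n)` an `R`-module via `u ↦ x²`, `w ↦ z²`.  Then the
`R`-module homomorphism `N → F[x, z]/(z^n)` with `e_i ↦ x^{n−1−i} z^i` is injective,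
with image the `F`-linear span of the classes of the monomials `x^a z^b` with
`0 ≤ b ≤ n−1`, `a + b ≥ n−1` and `a + b ≡ n−1 (mod 2)`. -/
theorem stmt_13 (F : Type*) [Field F] (n : ℕ) (hn : 1 ≤ n)
    (f : NN F n hn →ₛₗ[θ F n] SS F n)
    (hf : ∀ i : Fin n, f (en F n hn i)
      = Ideal.Quotient.mk (Ideal.span {(MvPolynomial.X 1 : RR F) ^ n})
          (MvPolynomial.X 0 ^ (n - 1 - i.val) * MvPolynomial.X 1 ^ i.val)) :
    Function.Injective f ∧
    Set.range f = ↑(Submodule.span F {q : SS F n | ∃ a b : ℕ,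
      b ≤ n - 1 ∧ n - 1 ≤ a + b ∧ (a + b) % 2 = (n - 1) % 2 ∧
      q = Ideal.Quotient.mk (Ideal.span {(MvPolynomial.X 1 : RR F) ^ n})
            (MvPolynomial.X 0 ^ a * MvPolynomial.X 1 ^ b)}) := by
  classical
  have hker : ∀ m : NN F n hn, f m = 0 → m = 0 := by
    intro m hm
    have hmem : m ∈ Submodule.span F (Set.range (vv F n hn)) := by
      rw [span_vv_top F n hn]; trivial
    rw [Finsupp.mem_span_range_iff_exists_finsupp] at hmem
    obtain ⟨c, hc⟩ := hmem
    have h1 : mkS F n (c.sum fun p a =>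
        a • ((MvPolynomial.X 0 : RR F) ^ (2 * p.1 + (n - 1 - p.2.val))
          * MvPolynomial.X 1 ^ p.2.val)) = f m := by
      rw [← hc, map_finsuppSum, map_finsuppSum]
      refine Finsupp.sum_congr fun p _ => ?_
      rw [f_smul_F F n hn f (c p) (vv F n hn p), f_vv F n hn f hf p,
        smul_mkS F n, MvPolynomial.smul_eq_C_mul]
    rw [hm] at h1
    have h2 : (c.sum fun p a =>
        a • ((MvPolynomial.X 0 : RR F) ^ (2 * p.1 + (n - 1 - p.2.val))
          * MvPolynomial.X 1 ^ p.2.val))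
        ∈ Ideal.span {(MvPolynomial.X 1 : RR F) ^ n} :=
      Ideal.Quotient.eq_zero_iff_mem.mp h1
    have hc0 : c = 0 := indep F n c h2
    rw [← hc, hc0, Finsupp.sum_zero_index]
  constructor
  · intro a b hab
    have h0 : f (a - b) = 0 := by rw [map_sub, hab, sub_self]
    have := hker _ h0
    rwa [sub_eq_zero] at this
  · let f₀ : NN F n hn →ₗ[F] SS F n :=
      { toFun := f, map_add' := fun x y => map_add f x y,
        map_smul' := fun c x => f_smul_F F n hn f c x }
    have hrange : Set.range f = (LinearMap.range f₀ : Set (SS F n)) := by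
      ext x
      constructor
      · rintro ⟨m, rfl⟩; exact ⟨m, rfl⟩
      · rintro ⟨m, rfl⟩; exact ⟨m, rfl⟩
    apply Set.Subset.antisymm
    · rintro x ⟨m, rfl⟩
      have hmem : m ∈ Submodule.span F (Set.range (vv F n hn)) := by
        rw [span_vv_top F n hn]; trivial
      induction hmem using Submodule.span_induction with
      | mem x hx =>
        obtain ⟨⟨j, i⟩, rfl⟩ := hx
        rw [f_vv F n hn f hf (j, i)]
        refine Submodule.subset_span ⟨2 * j + (n - 1 - i.val), i.val, ?_, ?_, ?_, rfl⟩
        · omega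
        · have := i.isLt; omega
        · have := i.isLt; omega
      | zero => rw [map_zero]; exact Submodule.zero_mem _
      | add x y _ _ hx hy => rw [map_add]; exact Submodule.add_mem _ hx hy
      | smul c x _ hx =>
        rw [f_smul_F F n hn f c x]; exact Submodule.smul_mem _ c hx
    · rw [hrange]
      refine Submodule.span_le.mpr ?_
      rintro q ⟨a, b, hb1, hab1, hab2, rfl⟩
      obtain ⟨i, j, k, hi, ha, hbb⟩ :
          ∃ i j k : ℕ, i < n ∧ a = 2 * j + (n - 1 - i) ∧ b = 2 * k + i := by
        by_cases hc : n - 1 ≤ a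
        · exact ⟨b % 2, (a - (n - 1 - b % 2)) / 2, b / 2, by omega, by omega, by omega⟩
        · exact ⟨n - 1 - a, 0, (b - (n - 1 - a)) / 2, by omega, by omega, by omega⟩
      refine ⟨((MvPolynomial.X 0 : RR F) ^ j * MvPolynomial.X 1 ^ k) • en F n hn ⟨i, hi⟩, ?_⟩
      show f _ = _
      rw [f_smul_en F n hn f hf j k ⟨i, hi⟩]
      have h1 : 2 * j + (n - 1 - ((⟨i, hi⟩ : Fin n) : ℕ)) = a := by
        show 2 * j + (n - 1 - i) = a; omega
      have h2 : 2 * k + ((⟨i, hi⟩ : Fin n) : ℕ) = b := by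
        show 2 * k + i = b; omega
      rw [h1, h2]
end
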